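/- arXiv:2010.14338 — 4 statements merged into one kernel-verified Lean document; each statement's English description precedes it below -/
import Mathlib

section
/- There is an absolute constant C > 0 such that the following holds: for every integer s ≥ 2 and every s-thin MinGMConn instance (P,D) (the points of P have at most s distinct x-coordinates and pairwise distinct y-coordinates), there exists a feasible solution Q for (P,D) with |Q| ≤ C·(1 + log₂ s)·IS(P,D); equivalently, opt(P,D) ≤ C·(1 + log₂ s)·IS(P,D). -/
abbrev Pt := ℝ × ℝ
abbrev Dem := Pt × Pt

noncomputable section

/-- ℓ1 distance in the plane. -/
def dist1 (p q : Pt) : ℝ := |p.1 - q.1| + |p.2 - q.2|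

/-- Two points are aligned if they are vertically or horizontally aligned. -/
def Aligned (p q : Pt) : Prop := p.1 = q.1 ∨ p.2 = q.2

/-- `p` and `q` are Manhattan-connected in the point set `S`: the Manhattan graph on `S`
contains a rectilinear path from `p` to `q` of total length `‖p - q‖₁`. -/
def MConnected (S : Set Pt) (p q : Pt) : Prop :=
  ∃ (k : ℕ) (f : Fin (k + 1) → Pt),
    f 0 = p ∧ f (Fin.last k) = q ∧ (∀ i, f i ∈ S) ∧
    (∀ i : Fin k, Aligned (f i.castSucc) (f i.succ)) ∧
    (∑ i : Fin k, dist1 (f i.castSucc) (f i.succ)) = dist1 p q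

/-- `Q` is a feasible solution for the instance `(P, D)`. -/
def MFeasible (P : Set Pt) (D : Set Dem) (Q : Set Pt) : Prop :=
  ∀ d ∈ D, MConnected (P ∪ Q) d.1 d.2

/-- Minimum cardinality of a feasible solution. -/
def optN (P : Set Pt) (D : Set Dem) : ℕ :=
  sInf {n | ∃ Q : Finset Pt, MFeasible P D ↑Q ∧ Q.card = n}

/-- The closed axis-aligned rectangle spanned by `p` and `q`. -/
def Rect (p q : Pt) : Set Pt :=
  {z | min p.1 q.1 ≤ z.1 ∧ z.1 ≤ max p.1 q.1 ∧ min p.2 q.2 ≤ z.2 ∧ z.2 ≤ max p.2 q.2}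

/-- The interior of the axis-aligned rectangle spanned by `p` and `q`. -/
def RectInt (p q : Pt) : Set Pt :=
  {z | min p.1 q.1 < z.1 ∧ z.1 < max p.1 q.1 ∧ min p.2 q.2 < z.2 ∧ z.2 < max p.2 q.2}

/-- The four corners of the rectangle spanned by `p` and `q`. -/
def Corners (p q : Pt) : Set Pt := {(p.1, p.2), (p.1, q.2), (q.1, p.2), (q.1, q.2)}

/-- Two demand rectangles are non-conflicting if neither contains a corner of the other
in its interior. -/
def NonConflicting (d e : Dem) : Prop :=
  (∀ c ∈ Corners e.1 e.2, c ∉ RectInt d.1 d.2) ∧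
  (∀ c ∈ Corners d.1 d.2, c ∉ RectInt e.1 e.2)

/-- `IRN D` : maximum cardinality of an independent (pairwise non-conflicting) subset of `D`. -/
def IRN (D : Set Dem) : ℕ :=
  sSup {n | ∃ D' : Finset Dem, ↑D' ⊆ D ∧ D'.card = n ∧
    ∀ d ∈ D', ∀ e ∈ D', d ≠ e → NonConflicting d e}

/-- The vertical segment at `x = a` spanning the `y`-range between `y1` and `y2`. -/
def VSeg (a y1 y2 : ℝ) : Set Pt :=
  {z | z.1 = a ∧ min y1 y2 ≤ z.2 ∧ z.2 ≤ max y1 y2}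

/-- A finite set of demands is vertically separable: its demand rectangles can be ordered
`R₁, …, R_k` with vertical segments `ℓ₁, …, ℓ_k`, where `ℓᵢ` connects the interior of the top
boundary of `Rᵢ` with the interior of its bottom boundary and avoids `R_j` for all `j > i`. -/
def VertSeparable (D' : Finset Dem) : Prop :=
  ∃ (e : Fin D'.card → Dem) (a : Fin D'.card → ℝ),
    Function.Injective e ∧ (∀ i, e i ∈ D') ∧
    (∀ i, min (e i).1.1 (e i).2.1 < a i ∧ a i < max (e i).1.1 (e i).2.1) ∧
    ∀ i j : Fin D'.card, i < j →
      VSeg (a i) (e i).1.2 (e i).2.2 ∩ Rect (e j).1 (e j).2 = ∅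

/-- `VSN D` : maximum cardinality of a vertically separable subset of `D`. -/
def VSN (D : Set Dem) : ℕ :=
  sSup {n | ∃ D' : Finset Dem, ↑D' ⊆ D ∧ D'.card = n ∧ VertSeparable D'}

/-- `λ(p,q)` : the left vertical side of the demand rectangle `R(p,q)`. -/
def LSeg (d : Dem) : Set Pt := VSeg d.1.1 d.1.2 d.2.2

/-- `ρ(p,q)` : the right vertical side of the demand rectangle `R(p,q)`. -/
def RSeg (d : Dem) : Set Pt := VSeg d.2.1 d.1.2 d.2.2

/-- A left boundary independent set: the left sides are pairwise non-overlapping. -/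
def LeftBIS (D' : Finset Dem) : Prop :=
  ∀ d ∈ D', ∀ e ∈ D', d ≠ e → Set.Subsingleton (LSeg d ∩ LSeg e)

/-- A right boundary independent set: the right sides are pairwise non-overlapping. -/
def RightBIS (D' : Finset Dem) : Prop :=
  ∀ d ∈ D', ∀ e ∈ D', d ≠ e → Set.Subsingleton (RSeg d ∩ RSeg e)

/-- `ISN D` : maximum cardinality of a (left or right) boundary independent subset of `D`. -/
def ISN (D : Set Dem) : ℕ :=
  sSup {n | ∃ D' : Finset Dem, ↑D' ⊆ D ∧ D'.card = n ∧ (LeftBIS D' ∨ RightBIS D')}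

/-- `(P, D)` is a MinGMConn instance: demands are between input points, ordered by
`x`-coordinate. -/
def IsInstance (P : Finset Pt) (D : Finset Dem) : Prop :=
  ∀ d ∈ D, d.1 ∈ P ∧ d.2 ∈ P ∧ d.1.1 < d.2.1

/-- The points of `P` have pairwise distinct `x`-coordinates. -/
def DistinctX (P : Finset Pt) : Prop := ∀ p ∈ P, ∀ q ∈ P, p ≠ q → p.1 ≠ q.1

/-- The points of `P` have pairwise distinct `y`-coordinates. -/
def DistinctY (P : Finset Pt) : Prop := ∀ p ∈ P, ∀ q ∈ P, p ≠ q → p.2 ≠ q.2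

end

noncomputable section

/-- The `i`-th open vertical strip determined by boundaries `b` (with `b 0 = ⊥`, `b s = ⊤`). -/
def strip (s : ℕ) (b : Fin (s + 1) → EReal) (i : Fin s) : Set Pt :=
  {z | b i.castSucc < (z.1 : EReal) ∧ (z.1 : EReal) < b i.succ}

/-- `b` describes a strip subdivision into `s` vertical strips via `s - 1` vertical lines,
none of which passes through a point of `P`. -/
def IsStripSubdivision (s : ℕ) (b : Fin (s + 1) → EReal) (P : Finset Pt) : Prop :=
  1 ≤ s ∧ StrictMono b ∧ b 0 = ⊥ ∧ b (Fin.last s) = ⊤ ∧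
    ∀ p ∈ P, ∀ i : Fin (s + 1), (p.1 : EReal) ≠ b i

/-- The projections `π_𝒮(P)` of the points of `P` onto the adjacent strip boundaries. -/
def stripProj (s : ℕ) (b : Fin (s + 1) → EReal) (P : Set Pt) : Set Pt :=
  {z | ∃ p ∈ P, ∃ i : Fin s, p ∈ strip s b i ∧
    ((i.val ≠ 0 ∧ z = ((b i.castSucc).toReal, p.2)) ∨
     (i.val + 1 ≠ s ∧ z = ((b i.succ).toReal, p.2)))}

/-- The demand set `π_𝒮(D)` of the inter-strip instance: demands between points in
different, non-adjacent strips, projected to the adjacent strip boundaries. -/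
def stripDem (s : ℕ) (b : Fin (s + 1) → EReal) (D : Set Dem) : Set Dem :=
  {d | ∃ pq ∈ D, ∃ i j : Fin s,
    pq.1 ∈ strip s b i ∧ pq.2 ∈ strip s b j ∧ i.val + 2 ≤ j.val ∧
    d = (((b i.succ).toReal, pq.1.2), ((b j.castSucc).toReal, pq.2.2))}

/-- `p 0, …, p n` form a triangular instance of size `n` :
`x`-coordinates strictly increasing, while `p 1, …, p n` form a descending diagonal
lying to the top-right of `p 0`. -/
def IsTriangular (n : ℕ) (p : Fin (n + 1) → Pt) : Prop :=
  (∀ i j : Fin (n + 1), i < j → (p i).1 < (p j).1) ∧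
  (∀ i j : Fin (n + 1), i ≠ 0 → i < j → (p j).2 < (p i).2) ∧
  (∀ i : Fin (n + 1), i ≠ 0 → (p 0).2 < (p i).2)

/-- The point set of a triangular instance. -/
def triP (n : ℕ) (p : Fin (n + 1) → Pt) : Finset Pt := Finset.image p Finset.univ

/-- The demand set of a triangular instance: `(p 0, p i)` for `1 ≤ i ≤ n`. -/
def triD (n : ℕ) (p : Fin (n + 1) → Pt) : Finset Dem :=
  Finset.image (fun i => (p 0, p i)) (Finset.univ.filter fun i : Fin (n + 1) => i ≠ 0)

/-- The triangular grid of a triangular instance. -/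
def triGrid (n : ℕ) (p : Fin (n + 1) → Pt) : Set Pt :=
  {z | (∃ i, z.1 = (p i).1) ∧ (∃ j, z.2 = (p j).2) ∧
    ∃ i : Fin (n + 1), i ≠ 0 ∧ z ∈ Rect (p 0) (p i)}

/-- `Q` is arboreally satisfied: for every non-aligned pair of its points, the rectangle
they span contains a third point of `Q`. -/
def ArboreallySatisfied (Q : Finset Pt) : Prop :=
  ∀ p ∈ Q, ∀ q ∈ Q, ¬ Aligned p q → ∃ r ∈ Q, r ≠ p ∧ r ≠ q ∧ r ∈ Rect p q

/-- The Manhattan graph on a finite point set `S`. -/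
def manhattanGraph (S : Finset Pt) : SimpleGraph {x : Pt // x ∈ S} where
  Adj a b := a ≠ b ∧ Aligned a.1 b.1
  symm := ⟨fun _ _ h => ⟨h.1.symm, h.2.imp Eq.symm Eq.symm⟩⟩
  loopless := ⟨fun _ h => h.1 rfl⟩

/-- The demand graph of an instance `(P, D)`. -/
def demandGraph (P : Finset Pt) (D : Finset Dem) : SimpleGraph {x : Pt // x ∈ P} where
  Adj a b := a ≠ b ∧ (((a : Pt), (b : Pt)) ∈ D ∨ ((b : Pt), (a : Pt)) ∈ D)
  symm := ⟨fun _ _ h => ⟨h.1.symm, h.2.symm⟩⟩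
  loopless := ⟨fun _ h => h.1 rfl⟩

/-- `C` is an axis-aligned rectangle: a product of two intervals. -/
def IsAxisRect (C : Set Pt) : Prop :=
  ∃ I J : Set ℝ, I.OrdConnected ∧ J.OrdConnected ∧ C = I ×ˢ J

end

namespace GMC

noncomputable section

def lo (d : Dem) : ℝ := min d.1.2 d.2.2
def hi (d : Dem) : ℝ := max d.1.2 d.2.2

lemma lo_le_hi (d : Dem) : lo d ≤ hi d := min_le_max

lemma abs_split {a b c : ℝ} (h1 : min a b ≤ c) (h2 : c ≤ max a b) :
    |a - c| + |c - b| = |a - b| := by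
  rcases le_total a b with h | h
  · rw [min_eq_left h] at h1; rw [max_eq_right h] at h2
    rw [abs_of_nonpos (by linarith), abs_of_nonpos (by linarith), abs_of_nonpos (by linarith)]
    ring
  · rw [min_eq_right h] at h1; rw [max_eq_left h] at h2
    rw [abs_of_nonneg (by linarith), abs_of_nonneg (by linarith), abs_of_nonneg (by linarith)]
    ring

/-- Greedy piercing of intervals with pairwise disjoint representatives. -/
lemma greedy (F : Finset Dem) :
    ∃ (T : Finset ℝ) (G : Finset Dem), G ⊆ F ∧ T.card = G.card ∧
      (∀ d ∈ F, ∃ τ ∈ T, lo d ≤ τ ∧ τ ≤ hi d) ∧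
      (∀ τ ∈ T, ∃ d ∈ G, lo d ≤ τ ∧ τ ≤ hi d) ∧
      (∀ d ∈ G, ∀ e ∈ G, d ≠ e → hi d < lo e ∨ hi e < lo d) := by
  induction F using Finset.strongInduction with
  | _ F ih =>
    rcases F.eq_empty_or_nonempty with rfl | hne
    · exact ⟨∅, ∅, by simp⟩
    · obtain ⟨d₀, hd₀, hmin⟩ := F.exists_min_image hi hne
      set τ₀ := hi d₀ with hτ₀
      set F' := F.filter (fun d => τ₀ < lo d) with hF'
      have hd₀F' : d₀ ∉ F' := by
        simp only [hF', Finset.mem_filter]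
        rintro ⟨-, h⟩; exact absurd (lo_le_hi d₀) (not_le.mpr h)
      have hss : F' ⊂ F := ⟨Finset.filter_subset _ _, fun hsub => hd₀F' (hsub hd₀)⟩
      obtain ⟨T', G', hG'F, hcard, hpierce, hwit, hsep⟩ := ih F' hss
      have hG'F2 : ∀ e ∈ G', τ₀ < lo e := fun e he =>
        (Finset.mem_filter.mp (hG'F he)).2
      have hτ₀T' : τ₀ ∉ T' := by
        intro h
        obtain ⟨e, heG', hle, -⟩ := hwit τ₀ h
        exact absurd hle (not_le.mpr (hG'F2 e heG'))
      have hd₀G' : d₀ ∉ G' := fun h => hd₀F' (hG'F h)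
      refine ⟨insert τ₀ T', insert d₀ G', ?_, ?_, ?_, ?_, ?_⟩
      · exact Finset.insert_subset hd₀ (hG'F.trans (Finset.filter_subset _ _))
      · rw [Finset.card_insert_of_notMem hτ₀T', Finset.card_insert_of_notMem hd₀G', hcard]
      · intro d hd
        by_cases h : lo d ≤ τ₀
        · exact ⟨τ₀, Finset.mem_insert_self _ _, h, hmin d hd⟩
        · obtain ⟨τ, hτ, h1, h2⟩ := hpierce d (Finset.mem_filter.mpr ⟨hd, not_le.mp h⟩)
          exact ⟨τ, Finset.mem_insert_of_mem hτ, h1, h2⟩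
      · intro τ hτ
        rcases Finset.mem_insert.mp hτ with rfl | hτ'
        · exact ⟨d₀, Finset.mem_insert_self _ _, lo_le_hi d₀, le_refl _⟩
        · obtain ⟨e, he, h1, h2⟩ := hwit τ hτ'
          exact ⟨e, Finset.mem_insert_of_mem he, h1, h2⟩
      · intro d hd e he hde
        rcases Finset.mem_insert.mp hd with rfl | hd' <;>
          rcases Finset.mem_insert.mp he with rfl | he'
        · exact absurd rfl hde
        · exact Or.inl (hG'F2 e he')
        · exact Or.inr (hG'F2 d hd')
        · exact hsep d hd' e he' hde

lemma ISN_bdd (D : Finset Dem) :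
    BddAbove {n | ∃ D' : Finset Dem, ↑D' ⊆ (↑D : Set Dem) ∧ D'.card = n ∧
      (LeftBIS D' ∨ RightBIS D')} := by
  refine ⟨D.card, ?_⟩
  rintro n ⟨D', hsub, rfl, -⟩
  exact Finset.card_le_card (Finset.coe_subset.mp hsub)

lemma card_le_ISN_left (D : Finset Dem) (G : Finset Dem) (hG : G ⊆ D)
    (h : ∀ d ∈ G, ∀ e ∈ G, d ≠ e → d.1.1 ≠ e.1.1 ∨ hi d < lo e ∨ hi e < lo d) :
    G.card ≤ ISN ↑D := by
  refine le_csSup (ISN_bdd D) ⟨G, Finset.coe_subset.mpr hG, rfl, Or.inl ?_⟩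
  intro d hd e he hde
  have hempty : LSeg d ∩ LSeg e = ∅ := by
    ext z
    simp only [Set.mem_inter_iff, Set.mem_empty_iff_false, iff_false]
    rintro ⟨⟨hz1, hz2, hz3⟩, ⟨hw1, hw2, hw3⟩⟩
    rcases h d hd e he hde with hx | hyd | hye
    · exact hx (hz1 ▸ hw1 ▸ rfl)
    · simp only [lo, hi] at hyd; linarith
    · simp only [lo, hi] at hye; linarith
  rw [hempty]; exact Set.subsingleton_empty

lemma card_le_ISN_right (D : Finset Dem) (G : Finset Dem) (hG : G ⊆ D)
    (h : ∀ d ∈ G, ∀ e ∈ G, d ≠ e → d.2.1 ≠ e.2.1 ∨ hi d < lo e ∨ hi e < lo d) :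
    G.card ≤ ISN ↑D := by
  refine le_csSup (ISN_bdd D) ⟨G, Finset.coe_subset.mpr hG, rfl, Or.inr ?_⟩
  intro d hd e he hde
  have hempty : RSeg d ∩ RSeg e = ∅ := by
    ext z
    simp only [Set.mem_inter_iff, Set.mem_empty_iff_false, iff_false]
    rintro ⟨⟨hz1, hz2, hz3⟩, ⟨hw1, hw2, hw3⟩⟩
    rcases h d hd e he hde with hx | hyd | hye
    · exact hx (hz1 ▸ hw1 ▸ rfl)
    · simp only [lo, hi] at hyd; linarith
    · simp only [lo, hi] at hye; linarith
  rw [hempty]; exact Set.subsingleton_empty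

def v (n : ℕ) : ℕ := Nat.findGreatest (fun w => 2 ^ w ∣ n) n

lemma v_dvd {n : ℕ} (hn : 0 < n) : 2 ^ v n ∣ n :=
  Nat.findGreatest_spec (P := fun w => 2 ^ w ∣ n) (Nat.zero_le n) (one_dvd n)

lemma v_le (n : ℕ) : v n ≤ n := Nat.findGreatest_le n

lemma v_max {n w : ℕ} (hn : 0 < n) (h : 2 ^ w ∣ n) : w ≤ v n :=
  Nat.le_findGreatest (le_trans (Nat.le_of_lt (Nat.lt_two_pow_self (n := w))) (Nat.le_of_dvd hn h)) h

lemma vcut {n w : ℕ} (hn : 0 < n) (hv : v n = w) : w + 1 ≤ v (n + 2 ^ w) := by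
  obtain ⟨a, ha⟩ := v_dvd hn
  rw [hv] at ha
  have haodd : ¬ 2 ∣ a := by
    intro ⟨b, hb⟩
    have : 2 ^ (w + 1) ∣ n := ⟨b, by rw [ha, hb]; ring⟩
    have := v_max hn this
    omega
  have h2 : 2 ^ (w + 1) ∣ n + 2 ^ w := by
    obtain ⟨c, hc⟩ : 2 ∣ a + 1 := by omega
    refine ⟨c, ?_⟩; rw [ha, pow_succ]; nlinarith [hc, pow_pos (by norm_num : (0:ℕ) < 2) w]
  exact v_max (by positivity) h2

lemma sep {i j w : ℕ} (hij : i < j) (hi : 2 ^ w ∣ i) (hj : 2 ^ w ∣ j) :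
    i + 2 ^ w ≤ j := by
  have hd : 2 ^ w ∣ j - i := Nat.dvd_sub hj hi
  have := Nat.le_of_dvd (by omega) hd
  omega

variable (T : Finset ℝ)

def idx (τ : ℝ) : ℕ := (T.filter (fun x => x ≤ τ)).card

lemma idx_pos {τ : ℝ} (h : τ ∈ T) : 1 ≤ idx T τ :=
  Finset.card_pos.mpr ⟨τ, Finset.mem_filter.mpr ⟨h, le_refl τ⟩⟩

lemma idx_le (τ : ℝ) : idx T τ ≤ T.card := Finset.card_le_card (Finset.filter_subset _ _)

lemma idx_strictMono {τ τ' : ℝ} (hτ' : τ' ∈ T) (h : τ < τ') : idx T τ < idx T τ' := by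
  apply Finset.card_lt_card
  constructor
  · intro x hx
    obtain ⟨h1, h2⟩ := Finset.mem_filter.mp hx
    exact Finset.mem_filter.mpr ⟨h1, h2.trans h.le⟩
  · intro hsub
    have : τ' ∈ T.filter (fun x => x ≤ τ) := hsub (Finset.mem_filter.mpr ⟨hτ', le_refl _⟩)
    exact absurd (Finset.mem_filter.mp this).2 (not_le.mpr h)

lemma idx_injOn : Set.InjOn (idx T) ↑T := by
  intro a ha b hb hab
  by_contra hne
  rcases lt_or_gt_of_ne hne with h | h
  · exact absurd hab (Nat.ne_of_lt (idx_strictMono T hb h))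
  · exact absurd hab.symm (Nat.ne_of_lt (idx_strictMono T ha h))

lemma idx_lt_iff {τ τ' : ℝ} (hτ : τ ∈ T) (hτ' : τ' ∈ T) :
    idx T τ < idx T τ' ↔ τ < τ' := by
  constructor
  · intro h
    by_contra hle
    rcases eq_or_lt_of_le (not_lt.mp hle) with rfl | hlt
    · exact absurd h (lt_irrefl _)
    · exact absurd (idx_strictMono T hτ hlt) (by omega)
  · exact idx_strictMono T hτ'

lemma idx_surj {m : ℕ} (h1 : 1 ≤ m) (h2 : m ≤ T.card) : ∃ τ ∈ T, idx T τ = m := by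
  have himg : T.image (idx T) = Finset.Icc 1 T.card := by
    apply Finset.eq_of_subset_of_card_le
    · intro n hn
      obtain ⟨τ, hτ, rfl⟩ := Finset.mem_image.mp hn
      exact Finset.mem_Icc.mpr ⟨idx_pos T hτ, idx_le T τ⟩
    · rw [Nat.card_Icc]
      simp only [Nat.add_sub_cancel]
      exact le_of_eq (Finset.card_image_of_injOn (idx_injOn T)).symm
  have : m ∈ T.image (idx T) := by rw [himg]; exact Finset.mem_Icc.mpr ⟨h1, h2⟩
  obtain ⟨τ, hτ, hτm⟩ := Finset.mem_image.mp this
  exact ⟨τ, hτ, hτm⟩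

lemma idx_val_count (w : ℕ) (f : ℕ → ℕ) (hf : ∀ τ ∈ T, f (idx T τ) = w → 2 ^ w ∣ idx T τ) :
    (T.filter (fun τ => f (idx T τ) = w)).card * 2 ^ w ≤ T.card := by
  have hpow : 0 < 2 ^ w := pow_pos (by norm_num) w
  have hcard : (T.filter (fun τ => f (idx T τ) = w)).card ≤ T.card / 2 ^ w := by
    have hIcc : (Finset.Icc 1 (T.card / 2 ^ w)).card = T.card / 2 ^ w := by
      rw [Nat.card_Icc, Nat.add_sub_cancel]
    rw [← hIcc]
    apply Finset.card_le_card_of_injOn (fun τ => idx T τ / 2 ^ w)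
    · intro τ hτ
      obtain ⟨hτT, hτw⟩ := Finset.mem_filter.mp hτ
      have hdvd := hf τ hτT hτw
      refine Finset.mem_Icc.mpr ⟨?_, Nat.div_le_div_right (idx_le T τ)⟩
      rw [Nat.one_le_div_iff hpow]
      exact Nat.le_of_dvd (idx_pos T hτT) hdvd
    · intro a ha b hb hab
      simp only [Finset.coe_filter, Set.mem_setOf_eq] at ha hb
      have hda := hf a ha.1 ha.2
      have hdb := hf b hb.1 hb.2
      simp only at hab
      have : idx T a = idx T b := by
        rw [← Nat.div_mul_cancel hda, ← Nat.div_mul_cancel hdb, hab]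
      exact idx_injOn T (Finset.mem_coe.mpr ha.1) (Finset.mem_coe.mpr hb.1) this
  calc (T.filter (fun τ => f (idx T τ) = w)).card * 2 ^ w
      ≤ (T.card / 2 ^ w) * 2 ^ w := Nat.mul_le_mul_right _ hcard
    _ ≤ T.card := Nat.div_mul_le_self _ _

lemma half_geom (n : ℕ) : (∑ k ∈ Finset.range n, ((1:ℝ)/2) ^ k) ≤ 2 := by
  have h := geom_sum_eq (by norm_num : ((1:ℝ)/2) ≠ 1) n
  rw [h]
  have : (0:ℝ) ≤ (1/2) ^ n := by positivity
  have h2 : ((1:ℝ)/2) - 1 = -(1/2) := by norm_num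
  rw [h2, div_neg, div_div_eq_mul_div, div_eq_mul_inv]
  nlinarith

lemma sum_tail (a b : ℕ) : (∑ w ∈ Finset.Ico a b, ((1:ℝ)/2) ^ w) ≤ 2 * (1/2) ^ a := by
  rw [Finset.sum_Ico_eq_sum_range]
  have : ∀ k, ((1:ℝ)/2) ^ (a + k) = (1/2)^a * (1/2)^k := fun k => pow_add _ _ _
  simp only [this, ← Finset.mul_sum]
  have := half_geom (b - a)
  have hp : (0:ℝ) ≤ (1/2)^a := by positivity
  nlinarith

lemma sum_bound (N s : ℕ) (A : ℝ) (c : ℕ → ℕ) (g : ℕ → ℝ)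
    (hNA : (N:ℝ) ≤ A) (hs : 2 ≤ s)
    (hgA : ∀ w, g w ≤ A) (hgc : ∀ w, g w ≤ (s:ℝ) * (c w)) (hc : ∀ w, c w * 2 ^ w ≤ N) :
    (∑ w ∈ Finset.range (N+1), g w) ≤ ((Nat.log 2 s : ℝ) + 1) * A + 2 * N := by
  have hA0 : 0 ≤ A := le_trans (by positivity) hNA
  set a := Nat.log 2 s + 1 with ha
  have hsa : (s : ℝ) ≤ 2 ^ a := by
    have := Nat.lt_pow_succ_log_self (by norm_num : 1 < 2) s
    exact_mod_cast this.le
  by_cases hcase : N + 1 ≤ a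
  · calc (∑ w ∈ Finset.range (N+1), g w) ≤ ∑ w ∈ Finset.range (N+1), A :=
          Finset.sum_le_sum (fun w _ => hgA w)
      _ = (N+1 : ℕ) * A := by rw [Finset.sum_const, Finset.card_range]; simp [nsmul_eq_mul]
      _ ≤ a * A := by
          apply mul_le_mul_of_nonneg_right _ hA0
          exact_mod_cast hcase
      _ = ((Nat.log 2 s : ℝ) + 1) * A := by push_cast [ha]; ring
      _ ≤ ((Nat.log 2 s : ℝ) + 1) * A + 2 * N := by
          have : (0:ℝ) ≤ 2 * N := by positivity
          linarith
  · push_neg at hcase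
    have hsplit : Finset.range (N+1) = Finset.Ico 0 (N+1) := by rw [Finset.range_eq_Ico]
    rw [hsplit, ← Finset.sum_Ico_consecutive _ (Nat.zero_le a) (by omega : a ≤ N + 1)]
    have h1 : (∑ w ∈ Finset.Ico 0 a, g w) ≤ a * A := by
      calc (∑ w ∈ Finset.Ico 0 a, g w) ≤ ∑ w ∈ Finset.Ico 0 a, A :=
            Finset.sum_le_sum (fun w _ => hgA w)
        _ = a * A := by rw [Finset.sum_const, Nat.card_Ico, Nat.sub_zero]; simp [nsmul_eq_mul]
    have h2 : (∑ w ∈ Finset.Ico a (N+1), g w) ≤ 2 * N := by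
      have hstep : ∀ w ∈ Finset.Ico a (N+1), g w ≤ ((s:ℝ) * N) * (1/2) ^ w := by
        intro w _
        have hcw : (c w : ℝ) ≤ (N : ℝ) * (1/2) ^ w := by
          have := hc w
          have hcast : ((c w : ℝ)) * 2 ^ w ≤ (N : ℝ) := by exact_mod_cast this
          have hpow : (0:ℝ) < 2 ^ w := by positivity
          calc (c w : ℝ) = ((c w : ℝ) * 2 ^ w) * (2 ^ w)⁻¹ := by field_simp
            _ ≤ (N : ℝ) * (2 ^ w)⁻¹ := by
                apply mul_le_mul_of_nonneg_right hcast (by positivity)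
            _ = (N : ℝ) * (1/2) ^ w := by rw [one_div, inv_pow]
        calc g w ≤ (s:ℝ) * (c w) := hgc w
          _ ≤ (s:ℝ) * ((N : ℝ) * (1/2) ^ w) := by
              apply mul_le_mul_of_nonneg_left hcw (by positivity)
          _ = ((s:ℝ) * N) * (1/2) ^ w := by ring
      calc (∑ w ∈ Finset.Ico a (N+1), g w)
          ≤ ∑ w ∈ Finset.Ico a (N+1), ((s:ℝ) * N) * (1/2) ^ w :=
            Finset.sum_le_sum hstep
        _ = ((s:ℝ) * N) * ∑ w ∈ Finset.Ico a (N+1), ((1:ℝ)/2) ^ w := by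
            rw [Finset.mul_sum]
        _ ≤ ((s:ℝ) * N) * (2 * (1/2) ^ a) := by
            apply mul_le_mul_of_nonneg_left (sum_tail a (N+1)) (by positivity)
        _ = 2 * N * ((s:ℝ) * (1/2) ^ a) := by ring
        _ ≤ 2 * N * 1 := by
            apply mul_le_mul_of_nonneg_left _ (by positivity)
            rw [one_div, inv_pow]
            rw [mul_inv_le_iff₀ (by positivity)]
            simpa using hsa
        _ = 2 * N := by ring
    have haa : (a : ℝ) = (Nat.log 2 s : ℝ) + 1 := by push_cast [ha]; ring
    rw [haa] at h1
    linarith [h1, h2]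

end
end GMC

/-- There is an absolute constant `C > 0` such that every `s`-thin instance
(`s ≥ 2`) has a feasible solution of size at most `C·(1 + log₂ s)·IS(P,D)`; equivalently,
`opt(P,D) ≤ C·(1 + log₂ s)·IS(P,D)`. -/
theorem stmt6 : ∃ C : ℝ, 0 < C ∧
    ∀ (s : ℕ), 2 ≤ s →
    ∀ (P : Finset Pt) (D : Finset Dem),
      IsInstance P D → DistinctY P → (P.image Prod.fst).card ≤ s →
      (∃ Q : Finset Pt, MFeasible ↑P ↑D ↑Q ∧
        (Q.card : ℝ) ≤ C * (1 + Real.logb 2 s) * (ISN ↑D : ℝ)) ∧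
      (optN ↑P ↑D : ℝ) ≤ C * (1 + Real.logb 2 s) * (ISN ↑D : ℝ) := by
  refine ⟨100, by norm_num, ?_⟩
  intro s hs P D hInst hDistY hcols
  have hlogb1 : (1:ℝ) ≤ Real.logb 2 s := by
    rw [show (1:ℝ) = Real.logb 2 2 by simp]
    exact Real.logb_le_logb_of_le (by norm_num) (by norm_num) (by exact_mod_cast hs)
  have hnatlog : ((Nat.log 2 s : ℕ) : ℝ) ≤ Real.logb 2 s := by
    have h1 : ((2:ℝ)) ^ (Nat.log 2 s) ≤ (s:ℝ) := by
      exact_mod_cast Nat.pow_log_le_self 2 (by omega : s ≠ 0)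
    have h2 : Real.logb 2 ((2:ℝ) ^ (Nat.log 2 s)) = (Nat.log 2 s : ℝ) := by
      rw [Real.logb_pow]; simp [Real.logb_self_eq_one]
    calc ((Nat.log 2 s : ℕ) : ℝ) = Real.logb 2 ((2:ℝ) ^ (Nat.log 2 s)) := h2.symm
      _ ≤ Real.logb 2 s := Real.logb_le_logb_of_le (by norm_num) (by positivity) h1
  suffices h : ∃ Q : Finset Pt, MFeasible ↑P ↑D ↑Q ∧
      (Q.card : ℝ) ≤ 100 * (1 + Real.logb 2 s) * (ISN ↑D : ℝ) by
    obtain ⟨Q, hQf, hQc⟩ := h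
    refine ⟨⟨Q, hQf, hQc⟩, ?_⟩
    have hopt : optN ↑P ↑D ≤ Q.card := Nat.sInf_le ⟨Q, hQf, rfl⟩
    calc (optN ↑P ↑D : ℝ) ≤ (Q.card : ℝ) := by exact_mod_cast hopt
      _ ≤ _ := hQc
  classical
  obtain ⟨T, G, hGD, hTG, hpierce, hwit, hsep⟩ := GMC.greedy D
  set N := T.card with hN
  have hN_ISN : N ≤ ISN ↑D := by
    rw [hTG]
    exact GMC.card_le_ISN_left D G hGD (fun d hd e he hne => Or.inr (hsep d hd e he hne))
  have hRex : ∀ d ∈ D, ∃ τ, (τ ∈ T ∧ GMC.lo d ≤ τ ∧ τ ≤ GMC.hi d) ∧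
      ∀ σ ∈ T, GMC.lo d ≤ σ → σ ≤ GMC.hi d → GMC.v (GMC.idx T σ) ≤ GMC.v (GMC.idx T τ) := by
    intro d hd
    obtain ⟨τ0, hτ0, h1, h2⟩ := hpierce d hd
    obtain ⟨τ, hτ, hmax⟩ := Finset.exists_max_image
      (T.filter (fun τ => GMC.lo d ≤ τ ∧ τ ≤ GMC.hi d)) (fun τ => GMC.v (GMC.idx T τ))
      ⟨τ0, Finset.mem_filter.mpr ⟨hτ0, h1, h2⟩⟩
    obtain ⟨hτT, hτ1, hτ2⟩ := Finset.mem_filter.mp hτ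
    exact ⟨τ, ⟨hτT, hτ1, hτ2⟩, fun σ hσ u1 u2 => hmax σ (Finset.mem_filter.mpr ⟨hσ, u1, u2⟩)⟩
  choose! rr hrr hrrmax using hRex
  -- the two bend points of each demand
  set Q : Finset Pt := D.image (fun d => (d.1.1, rr d)) ∪ D.image (fun d => (d.2.1, rr d))
    with hQdef
  have hfeas : MFeasible ↑P ↑D ↑Q := by
    intro d hd
    have hdD : d ∈ D := hd
    obtain ⟨hdT, hdlo, hdhi⟩ := hrr d hdD
    obtain ⟨hP1, hP2, -⟩ := hInst d hdD
    refine ⟨3, ![d.1, (d.1.1, rr d), (d.2.1, rr d), d.2], rfl, rfl, ?_, ?_, ?_⟩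
    · intro i
      fin_cases i
      · exact Or.inl hP1
      · refine Or.inr ?_
        rw [hQdef]
        push_cast
        exact Or.inl ⟨d, hdD, rfl⟩
      · refine Or.inr ?_
        rw [hQdef]
        push_cast
        exact Or.inr ⟨d, hdD, rfl⟩
      · exact Or.inl hP2
    · intro i
      fin_cases i
      · exact Or.inl rfl
      · exact Or.inr rfl
      · exact Or.inl rfl
    · rw [Fin.sum_univ_three]
      show dist1 d.1 (d.1.1, rr d) + dist1 (d.1.1, rr d) (d.2.1, rr d) +
          dist1 (d.2.1, rr d) d.2 = dist1 d.1 d.2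
      have hsplit := GMC.abs_split (a := d.1.2) (b := d.2.2) (c := rr d) hdlo hdhi
      simp only [dist1, sub_self, abs_zero]
      linarith [hsplit]
  refine ⟨Q, hfeas, ?_⟩
  -- core geometric separation: same valuation, smaller index ⇒ intervals separated
  have hcore : ∀ d ∈ D, ∀ e ∈ D, GMC.v (GMC.idx T (rr d)) = GMC.v (GMC.idx T (rr e)) →
      GMC.idx T (rr d) < GMC.idx T (rr e) → GMC.hi d < GMC.lo e := by
    intro d hd e he hvv hIJ
    obtain ⟨hdT, hdlo, hdhi⟩ := hrr d hd
    obtain ⟨heT, helo, hehi⟩ := hrr e he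
    set I := GMC.idx T (rr d) with hI
    set J := GMC.idx T (rr e) with hJ
    have hIpos : 1 ≤ I := GMC.idx_pos T hdT
    have hJpos : 1 ≤ J := GMC.idx_pos T heT
    have hJle : J ≤ N := GMC.idx_le T (rr e)
    have hdvdI : 2 ^ GMC.v I ∣ I := GMC.v_dvd (by omega)
    have hdvdJ : 2 ^ GMC.v I ∣ J := by
      rw [hvv]; exact GMC.v_dvd (by omega)
    have hCJ : I + 2 ^ GMC.v I ≤ J := GMC.sep hIJ hdvdI hdvdJ
    have hC1 : 1 ≤ I + 2 ^ GMC.v I := by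
      have := pow_pos (by norm_num : (0:ℕ) < 2) (GMC.v I); omega
    obtain ⟨σ, hσT, hσidx⟩ := GMC.idx_surj T hC1 (hCJ.trans hJle)
    have hvC : GMC.v I + 1 ≤ GMC.v (I + 2 ^ GMC.v I) := GMC.vcut (by omega) rfl
    have hCneJ : I + 2 ^ GMC.v I ≠ J := by
      intro hEq
      rw [hEq, ← hvv] at hvC
      omega
    have h1 : rr d < σ := by
      have : I < I + 2 ^ GMC.v I := by
        have := pow_pos (by norm_num : (0:ℕ) < 2) (GMC.v I); omega
      exact (GMC.idx_lt_iff T hdT hσT).mp (by rw [hσidx]; exact this)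
    have h2 : σ < rr e := by
      have : I + 2 ^ GMC.v I < J := lt_of_le_of_ne hCJ hCneJ
      exact (GMC.idx_lt_iff T hσT heT).mp (by rw [hσidx]; exact this)
    have hσd : ¬ (GMC.lo d ≤ σ ∧ σ ≤ GMC.hi d) := by
      rintro ⟨u1, u2⟩
      have hmax := hrrmax d hd σ hσT u1 u2
      rw [hσidx, ← hI] at hmax
      omega
    have hσe : ¬ (GMC.lo e ≤ σ ∧ σ ≤ GMC.hi e) := by
      rintro ⟨u1, u2⟩
      have hmax := hrrmax e he σ hσT u1 u2
      rw [hσidx, ← hJ, ← hvv] at hmax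
      omega
    have hd2 : GMC.hi d < σ := by
      by_contra hcon
      exact hσd ⟨le_trans hdlo h1.le, not_lt.mp hcon⟩
    have he2 : σ < GMC.lo e := by
      by_contra hcon
      exact hσe ⟨not_lt.mp hcon, le_trans h2.le hehi⟩
    linarith
  -- number of pierce levels with rank-valuation w
  set cw : ℕ → ℕ := fun w => (T.filter (fun τ => GMC.v (GMC.idx T τ) = w)).card with hcwdef
  have hcwN : ∀ w, cw w * 2 ^ w ≤ N := by
    intro w
    exact GMC.idx_val_count T w GMC.v (fun τ hτ hvτ => by
      rw [← hvτ]; exact GMC.v_dvd (GMC.idx_pos T hτ))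
  set A : ℝ := (ISN (↑D : Set Dem) : ℝ) with hAdef
  have hA0 : (0:ℝ) ≤ A := by rw [hAdef]; positivity
  have hNA : (N : ℝ) ≤ A := by rw [hAdef]; exact_mod_cast hN_ISN
  -- per-valuation ISN bound, left version
  have hLA : ∀ w : ℕ,
      (((D.filter (fun d => GMC.v (GMC.idx T (rr d)) = w)).image
        (fun d => (d.1.1, rr d))).card : ℝ) ≤ A := by
    intro w
    set Dw := D.filter (fun d => GMC.v (GMC.idx T (rr d)) = w) with hDw
    set E := Dw.image (fun d => (d.1.1, rr d)) with hE
    have hsecx : ∀ z ∈ E, ∃ d, d ∈ Dw ∧ (d.1.1, rr d) = z := by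
      intro z hz
      obtain ⟨d, hd, hdz⟩ := Finset.mem_image.mp hz
      exact ⟨d, hd, hdz⟩
    choose! sec hsec1 hsec2 using hsecx
    have hinj : Set.InjOn sec ↑E := by
      intro z hz z' hz' hzz
      rw [← hsec2 z hz, ← hsec2 z' hz', hzz]
    have hGG : E.image sec ⊆ D := by
      intro d hd
      obtain ⟨z, hz, rfl⟩ := Finset.mem_image.mp hd
      exact (Finset.mem_filter.mp (hsec1 z hz)).1
    have hcardGG : (E.image sec).card = E.card := Finset.card_image_of_injOn hinj
    rw [hAdef]
    have : (E.image sec).card ≤ ISN (↑D : Set Dem) := by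
      apply GMC.card_le_ISN_left D _ hGG
      intro d hd e he hde
      obtain ⟨z, hz, rfl⟩ := Finset.mem_image.mp hd
      obtain ⟨z', hz', rfl⟩ := Finset.mem_image.mp he
      have hzz : z ≠ z' := fun h => hde (by rw [h])
      obtain ⟨hzD, hzw⟩ := Finset.mem_filter.mp (hsec1 z hz)
      obtain ⟨hz'D, hz'w⟩ := Finset.mem_filter.mp (hsec1 z' hz')
      by_cases hx : (sec z).1.1 = (sec z').1.1
      · have hrrne : rr (sec z) ≠ rr (sec z') := by
          intro hr
          apply hzz
          rw [← hsec2 z hz, ← hsec2 z' hz', hx, hr]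
        have hIne : GMC.idx T (rr (sec z)) ≠ GMC.idx T (rr (sec z')) := by
          intro h
          exact hrrne (GMC.idx_injOn T
            (Finset.mem_coe.mpr (hrr (sec z) hzD).1)
            (Finset.mem_coe.mpr (hrr (sec z') hz'D).1) h)
        rcases lt_or_gt_of_ne hIne with hlt | hgt
        · exact Or.inr (Or.inl (hcore _ hzD _ hz'D (hzw.trans hz'w.symm) hlt))
        · exact Or.inr (Or.inr (hcore _ hz'D _ hzD (hz'w.trans hzw.symm) hgt))
      · exact Or.inl hx
    rw [hcardGG] at this
    exact_mod_cast this
  -- per-valuation ISN bound, right version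
  have hRA : ∀ w : ℕ,
      (((D.filter (fun d => GMC.v (GMC.idx T (rr d)) = w)).image
        (fun d => (d.2.1, rr d))).card : ℝ) ≤ A := by
    intro w
    set Dw := D.filter (fun d => GMC.v (GMC.idx T (rr d)) = w) with hDw
    set E := Dw.image (fun d => (d.2.1, rr d)) with hE
    have hsecx : ∀ z ∈ E, ∃ d, d ∈ Dw ∧ (d.2.1, rr d) = z := by
      intro z hz
      obtain ⟨d, hd, hdz⟩ := Finset.mem_image.mp hz
      exact ⟨d, hd, hdz⟩
    choose! sec hsec1 hsec2 using hsecx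
    have hinj : Set.InjOn sec ↑E := by
      intro z hz z' hz' hzz
      rw [← hsec2 z hz, ← hsec2 z' hz', hzz]
    have hGG : E.image sec ⊆ D := by
      intro d hd
      obtain ⟨z, hz, rfl⟩ := Finset.mem_image.mp hd
      exact (Finset.mem_filter.mp (hsec1 z hz)).1
    have hcardGG : (E.image sec).card = E.card := Finset.card_image_of_injOn hinj
    rw [hAdef]
    have : (E.image sec).card ≤ ISN (↑D : Set Dem) := by
      apply GMC.card_le_ISN_right D _ hGG
      intro d hd e he hde
      obtain ⟨z, hz, rfl⟩ := Finset.mem_image.mp hd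
      obtain ⟨z', hz', rfl⟩ := Finset.mem_image.mp he
      have hzz : z ≠ z' := fun h => hde (by rw [h])
      obtain ⟨hzD, hzw⟩ := Finset.mem_filter.mp (hsec1 z hz)
      obtain ⟨hz'D, hz'w⟩ := Finset.mem_filter.mp (hsec1 z' hz')
      by_cases hx : (sec z).2.1 = (sec z').2.1
      · have hrrne : rr (sec z) ≠ rr (sec z') := by
          intro hr
          apply hzz
          rw [← hsec2 z hz, ← hsec2 z' hz', hx, hr]
        have hIne : GMC.idx T (rr (sec z)) ≠ GMC.idx T (rr (sec z')) := by
          intro h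
          exact hrrne (GMC.idx_injOn T
            (Finset.mem_coe.mpr (hrr (sec z) hzD).1)
            (Finset.mem_coe.mpr (hrr (sec z') hz'D).1) h)
        rcases lt_or_gt_of_ne hIne with hlt | hgt
        · exact Or.inr (Or.inl (hcore _ hzD _ hz'D (hzw.trans hz'w.symm) hlt))
        · exact Or.inr (Or.inr (hcore _ hz'D _ hzD (hz'w.trans hzw.symm) hgt))
      · exact Or.inl hx
    rw [hcardGG] at this
    exact_mod_cast this
  -- per-valuation column bound
  have hLB : ∀ w : ℕ, ∀ π : Dem → Pt, (∀ d ∈ D, (π d).1 ∈ P.image Prod.fst) →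
      (∀ d, (π d).2 = rr d) →
      (((D.filter (fun d => GMC.v (GMC.idx T (rr d)) = w)).image π).card : ℝ)
        ≤ (s : ℝ) * (cw w) := by
    intro w π hπ1 hπ2
    have hsub : (D.filter (fun d => GMC.v (GMC.idx T (rr d)) = w)).image π ⊆
        (P.image Prod.fst) ×ˢ (T.filter (fun τ => GMC.v (GMC.idx T τ) = w)) := by
      intro z hz
      obtain ⟨d, hd, rfl⟩ := Finset.mem_image.mp hz
      obtain ⟨hdD, hdw⟩ := Finset.mem_filter.mp hd
      apply Finset.mem_product.mpr
      constructor
      · exact hπ1 d hdD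
      · rw [hπ2 d]
        exact Finset.mem_filter.mpr ⟨(hrr d hdD).1, hdw⟩
    have hcard := Finset.card_le_card hsub
    rw [Finset.card_product] at hcard
    have : ((D.filter (fun d => GMC.v (GMC.idx T (rr d)) = w)).image π).card ≤ s * cw w := by
      calc _ ≤ (P.image Prod.fst).card * cw w := hcard
        _ ≤ s * cw w := Nat.mul_le_mul_right _ hcols
    exact_mod_cast this
  -- decompose the two image sets by valuation
  have hdecomp : ∀ π : Dem → Pt, (∀ d, (π d).2 = rr d) →
      ((D.image π).card : ℝ) ≤
        ∑ w ∈ Finset.range (N+1),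
          (((D.filter (fun d => GMC.v (GMC.idx T (rr d)) = w)).image π).card : ℝ) := by
    intro π hπ2
    have hsub : D.image π ⊆ (Finset.range (N+1)).biUnion
        (fun w => (D.filter (fun d => GMC.v (GMC.idx T (rr d)) = w)).image π) := by
      intro z hz
      obtain ⟨d, hd, rfl⟩ := Finset.mem_image.mp hz
      apply Finset.mem_biUnion.mpr
      refine ⟨GMC.v (GMC.idx T (rr d)), Finset.mem_range.mpr ?_,
        Finset.mem_image_of_mem _ (Finset.mem_filter.mpr ⟨hd, rfl⟩)⟩
      have h1 : GMC.v (GMC.idx T (rr d)) ≤ GMC.idx T (rr d) := GMC.v_le _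
      have h2 : GMC.idx T (rr d) ≤ N := GMC.idx_le T (rr d)
      omega
    calc ((D.image π).card : ℝ)
        ≤ (((Finset.range (N+1)).biUnion
            (fun w => (D.filter (fun d => GMC.v (GMC.idx T (rr d)) = w)).image π)).card : ℝ) := by
          exact_mod_cast Finset.card_le_card hsub
      _ ≤ _ := by
          have := Finset.card_biUnion_le (s := Finset.range (N+1))
            (t := fun w => (D.filter (fun d => GMC.v (GMC.idx T (rr d)) = w)).image π)
          push_cast
          exact_mod_cast this
  -- assemble
  have hQcard : (Q.card : ℝ) ≤
      ((D.image (fun d => (d.1.1, rr d))).card : ℝ) +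
      ((D.image (fun d => (d.2.1, rr d))).card : ℝ) := by
    rw [hQdef]
    exact_mod_cast Finset.card_union_le _ _
  have hsumL : ((D.image (fun d => (d.1.1, rr d))).card : ℝ) ≤
      ((Nat.log 2 s : ℝ) + 1) * A + 2 * N := by
    calc ((D.image (fun d => (d.1.1, rr d))).card : ℝ)
        ≤ ∑ w ∈ Finset.range (N+1),
            (((D.filter (fun d => GMC.v (GMC.idx T (rr d)) = w)).image
              (fun d => (d.1.1, rr d))).card : ℝ) := hdecomp _ (fun d => rfl)
      _ ≤ _ := by
          apply GMC.sum_bound N s A cw _ hNA hs hLA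
          · intro w
            exact hLB w (fun d => (d.1.1, rr d))
              (fun d hd => by simpa using Finset.mem_image_of_mem Prod.fst (hInst d hd).1)
              (fun d => rfl)
          · exact hcwN
  have hsumR : ((D.image (fun d => (d.2.1, rr d))).card : ℝ) ≤
      ((Nat.log 2 s : ℝ) + 1) * A + 2 * N := by
    calc ((D.image (fun d => (d.2.1, rr d))).card : ℝ)
        ≤ ∑ w ∈ Finset.range (N+1),
            (((D.filter (fun d => GMC.v (GMC.idx T (rr d)) = w)).image
              (fun d => (d.2.1, rr d))).card : ℝ) := hdecomp _ (fun d => rfl)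
      _ ≤ _ := by
          apply GMC.sum_bound N s A cw _ hNA hs hRA
          · intro w
            exact hLB w (fun d => (d.2.1, rr d))
              (fun d hd => by simpa using Finset.mem_image_of_mem Prod.fst (hInst d hd).2.1)
              (fun d => rfl)
          · exact hcwN
  have hfinal : (Q.card : ℝ) ≤ 2 * (((Nat.log 2 s : ℝ) + 1) * A + 2 * N) := by
    linarith
  have hstep2 : 2 * (((Nat.log 2 s : ℝ) + 1) * A + 2 * N) ≤
      100 * (1 + Real.logb 2 s) * A := by
    have h1 : ((Nat.log 2 s : ℝ) + 1) ≤ 1 + Real.logb 2 s := by linarith [hnatlog]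
    have h2 : (N : ℝ) ≤ A := hNA
    have h3 : (1:ℝ) + Real.logb 2 s ≥ 2 := by linarith [hlogb1]
    nlinarith [hA0, mul_le_mul_of_nonneg_right h1 hA0]
  calc (Q.card : ℝ) ≤ _ := hfinal
    _ ≤ _ := hstep2
end

section
/- There is an absolute constant c > 0 such that for every integer s ≥ 2 there exists a MinGMConn instance (P,D) with D nonempty whose input points lie on at most s distinct x-coordinates (and have pairwise distinct y-coordinates) such that opt(P,D) ≥ c·(log₂ s)·IS(P,D). In other words, the bound opt(P,D) = O(log s)·IS(P,D) for s-thin instances is tight up to a constant factor. -/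
noncomputable section StmtSeven



/-- bit-reversal of the low `k` bits -/
def revBits : ℕ → ℕ → ℕ
  | 0, _ => 0
  | (k+1), t => t % 2 * 2^k + revBits k (t/2)

lemma revBits_lt : ∀ k t, revBits k t < 2^k := by
  intro k
  induction k with
  | zero => intro t; simp [revBits]
  | succ k ih =>
    intro t
    have h1 : t % 2 ≤ 1 := Nat.lt_succ_iff.mp (Nat.mod_lt _ (by norm_num))
    simp only [revBits, pow_succ]
    nlinarith [ih (t/2)]

lemma revBits_inj : ∀ k a b, a < 2^k → b < 2^k → revBits k a = revBits k b → a = b := by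
  intro k
  induction k with
  | zero => intro a b ha hb _; interval_cases a <;> interval_cases b <;> rfl
  | succ k ih =>
    intro a b ha hb h
    simp only [revBits] at h
    have hra := revBits_lt k (a/2)
    have hrb := revBits_lt k (b/2)
    have hp : a % 2 = b % 2 ∧ revBits k (a/2) = revBits k (b/2) := by
      rcases Nat.mod_two_eq_zero_or_one a with h1 | h1 <;>
      rcases Nat.mod_two_eq_zero_or_one b with h2 | h2 <;>
        rw [h1, h2] at h <;> simp at h <;> constructor <;> omega
    have hd : a / 2 = b / 2 := by
      apply ih _ _ _ _ hp.2
      · have : a < 2 * 2^k := by rw [← pow_succ']; exact ha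
        exact Nat.div_lt_of_lt_mul this
      · have : b < 2 * 2^k := by rw [← pow_succ']; exact hb
        exact Nat.div_lt_of_lt_mul this
    omega

lemma revBits_add_pow : ∀ k ℓ t, ℓ < k → t / 2^ℓ % 2 = 0 →
    revBits k (t + 2^ℓ) = revBits k t + 2^(k-1-ℓ) := by
  intro k
  induction k with
  | zero => omega
  | succ k ih =>
    intro ℓ t hℓ hbit
    cases ℓ with
    | zero =>
      simp only [pow_zero, Nat.div_one] at hbit
      simp only [revBits]
      have h1 : (t+1) % 2 = 1 := by omega
      have h2 : (t+1) / 2 = t / 2 := by omega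
      have h3 : t % 2 = 0 := hbit
      simp [h1, h2, h3]
      ring
    | succ j =>
      have hj : j < k := by omega
      have hbit' : (t/2) / 2^j % 2 = 0 := by
        rw [Nat.div_div_eq_div_mul]
        rw [show (2:ℕ) * 2^j = 2^(j+1) by ring]
        exact hbit
      simp only [revBits]
      have h1 : (t + 2^(j+1)) % 2 = t % 2 := by
        rw [pow_succ]
        omega
      have h2 : (t + 2^(j+1)) / 2 = t/2 + 2^j := by
        rw [pow_succ]
        omega
      rw [h1, h2, ih j (t/2) hj hbit']
      have h3 : k + 1 - 1 - (j+1) = k - 1 - j := by omega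
      rw [h3]
      ring

lemma revBits_mod_lt : ∀ k ℓ t, ℓ < k → t / 2^ℓ % 2 = 0 →
    revBits k t % 2^(k-ℓ) < 2^(k-1-ℓ) := by
  intro k
  induction k with
  | zero => omega
  | succ k ih =>
    intro ℓ t hℓ hbit
    cases ℓ with
    | zero =>
      simp only [pow_zero, Nat.div_one] at hbit
      have h0 : revBits (k+1) t < 2^(k+1) := revBits_lt _ _
      simp only [Nat.sub_zero]
      rw [Nat.mod_eq_of_lt h0]
      simp only [revBits, hbit]
      simpa using revBits_lt k (t/2)
    | succ j =>
      have hj : j < k := by omega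
      have hbit' : (t/2) / 2^j % 2 = 0 := by
        rw [Nat.div_div_eq_div_mul, show (2:ℕ) * 2^j = 2^(j+1) by ring]
        exact hbit
      have key := ih j (t/2) hj hbit'
      simp only [revBits]
      have hsub1 : k + 1 - (j+1) = k - j := by omega
      have hsub2 : k + 1 - 1 - (j+1) = k - 1 - j := by omega
      rw [hsub1, hsub2]
      obtain ⟨c, hc⟩ : (2:ℕ)^(k-j) ∣ t % 2 * 2^k :=
        Dvd.dvd.mul_left (pow_dvd_pow 2 (by omega)) _
      rw [add_comm, hc, Nat.add_mul_mod_self_left]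
      exact key

/-- top bits of revBits k t are determined by t mod 2^ℓ -/
lemma revBits_div : ∀ k ℓ t, ℓ ≤ k → revBits k t / 2^(k-ℓ) = revBits ℓ (t % 2^ℓ) := by
  intro k
  induction k with
  | zero =>
    intro ℓ t hℓ
    interval_cases ℓ
    simp [revBits]
  | succ k ih =>
    intro ℓ t hℓ
    cases ℓ with
    | zero =>
      simp only [Nat.sub_zero]
      rw [Nat.div_eq_of_lt (revBits_lt _ _)]
      rfl
    | succ j =>
      have hj : j ≤ k := by omega
      have hsub : k + 1 - (j+1) = k - j := by omega
      rw [hsub]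
      simp only [revBits]
      have hr := revBits_lt k (t/2)
      have e1 : t % 2 * 2^k = (t % 2 * 2^j) * 2^(k-j) := by
        rw [mul_assoc, ← pow_add]
        congr 2
        omega
      rw [e1]
      have h2kj : 0 < (2:ℕ)^(k-j) := Nat.two_pow_pos _
      rw [add_comm, Nat.add_mul_div_right _ _ h2kj]
      rw [ih j (t/2) hj]
      have e2 : (t % 2^(j+1)) % 2 = t % 2 := Nat.mod_mod_of_dvd t (dvd_pow_self 2 (by omega))
      have e3 : (t % 2^(j+1)) / 2 = (t/2) % 2^j := by
        rw [pow_succ']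
        exact Nat.mod_mul_right_div_self t 2 (2^j)
      rw [e2, e3]
      ring




lemma dist1_triangle (p r q : Pt) : dist1 p q ≤ dist1 p r + dist1 r q := by
  unfold dist1
  have h1 := abs_sub_le p.1 r.1 q.1
  have h2 := abs_sub_le p.2 r.2 q.2
  linarith

lemma dist1_self (p : Pt) : dist1 p p = 0 := by simp [dist1]

lemma between_of_abs_eq {a b c : ℝ} (h : |a - b| + |b - c| = |a - c|) :
    min a c ≤ b ∧ b ≤ max a c := by
  rcases le_total a c with hac | hac <;>
  rcases le_total a b with hab | hab <;>
  rcases le_total b c with hbc | hbc <;>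
    simp only [min_def, max_def] <;>
    split_ifs <;>
    constructor <;>
    rw [abs_sub_comm a b, abs_sub_comm b c, abs_sub_comm a c] at h <;>
    rcases abs_cases (b - a) with ⟨e1, _⟩ | ⟨e1, _⟩ <;>
    rcases abs_cases (c - b) with ⟨e2, _⟩ | ⟨e2, _⟩ <;>
    rcases abs_cases (c - a) with ⟨e3, _⟩ | ⟨e3, _⟩ <;>
    rw [e1, e2, e3] at h <;> linarith

/-- main extraction lemma: from an M-connecting path and a vertical line strictly between
the endpoints, get a consecutive aligned pair of path points straddling the line,
both inside the rectangle. -/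
lemma mconn_extract {S : Set Pt} {p q : Pt} (h : MConnected S p q) {μ : ℝ}
    (hp : p.1 < μ) (hq : μ < q.1) :
    ∃ u v : Pt, u ∈ S ∧ v ∈ S ∧ Aligned u v ∧ u.1 ≤ μ ∧ μ ≤ v.1 ∧
      u ∈ Rect p q ∧ v ∈ Rect p q := by
  obtain ⟨n, f, h0, hl, hmem, halign, hsum⟩ := h
  set F : ℕ → Pt := fun i => f ⟨min i n, Nat.lt_succ_of_le (Nat.min_le_right i n)⟩ with hF
  have hFval : ∀ i (hi : i ≤ n), F i = f ⟨i, Nat.lt_succ_of_le hi⟩ := by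
    intro i hi
    simp only [hF]
    congr 1
    exact Fin.ext (by simp [Nat.min_eq_left hi])
  have hF0 : F 0 = p := by
    rw [hFval 0 (Nat.zero_le n), ← h0]
    congr 1
  have hFn : F n = q := by
    rw [hFval n le_rfl, ← hl]
    congr 1
  have hFmem : ∀ i, F i ∈ S := fun i => hmem _
  have hcons : ∀ i < n, Aligned (F i) (F (i+1)) := by
    intro i hi
    have e1 : F i = f (Fin.castSucc ⟨i, hi⟩) := by
      rw [hFval i (le_of_lt hi)]; rfl
    have e2 : F (i+1) = f (Fin.succ ⟨i, hi⟩) := by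
      rw [hFval (i+1) hi]; rfl
    rw [e1, e2]; exact halign _
  -- sum over range n
  have hsum' : ∑ i ∈ Finset.range n, dist1 (F i) (F (i+1)) = dist1 p q := by
    rw [← hsum]
    rw [← Fin.sum_univ_eq_sum_range (fun i => dist1 (F i) (F (i+1))) n]
    apply Finset.sum_congr rfl
    intro i _
    congr 1
    · rw [hFval i.val (le_of_lt i.isLt)]; rfl
    · rw [hFval (i.val+1) i.isLt]; rfl
  -- chain bound
  have chain : ∀ a b : ℕ, a ≤ b → b ≤ n →
      dist1 (F a) (F b) ≤ ∑ i ∈ Finset.Ico a b, dist1 (F i) (F (i+1)) := by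
    intro a b hab hbn
    induction b, hab using Nat.le_induction with
    | base => simp [dist1_self]
    | succ b hab ih =>
      have hbn' : b ≤ n := by omega
      calc dist1 (F a) (F (b+1)) ≤ dist1 (F a) (F b) + dist1 (F b) (F (b+1)) :=
            dist1_triangle _ _ _
        _ ≤ (∑ i ∈ Finset.Ico a b, dist1 (F i) (F (i+1))) + dist1 (F b) (F (b+1)) := by
            linarith [ih hbn']
        _ = ∑ i ∈ Finset.Ico a (b+1), dist1 (F i) (F (i+1)) := by
            rw [Finset.sum_Ico_succ_top hab]
  have hrect : ∀ j ≤ n, F j ∈ Rect p q := by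
    intro j hj
    have hsplit : (∑ i ∈ Finset.range j, dist1 (F i) (F (i+1)))
        + (∑ i ∈ Finset.Ico j n, dist1 (F i) (F (i+1))) = dist1 p q := by
      rw [← hsum', Finset.range_eq_Ico, Finset.range_eq_Ico]
      exact Finset.sum_Ico_consecutive (fun i => dist1 (F i) (F (i+1))) (Nat.zero_le j) hj
    have c1 : dist1 p (F j) ≤ ∑ i ∈ Finset.range j, dist1 (F i) (F (i+1)) := by
      rw [← hF0, Finset.range_eq_Ico]
      exact chain 0 j (Nat.zero_le j) hj
    have c2 : dist1 (F j) q ≤ ∑ i ∈ Finset.Ico j n, dist1 (F i) (F (i+1)) := by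
      rw [← hFn]
      exact chain j n hj le_rfl
    have c3 : dist1 p q ≤ dist1 p (F j) + dist1 (F j) q := dist1_triangle _ _ _
    have heq : dist1 p (F j) + dist1 (F j) q = dist1 p q := by linarith
    -- coordinatewise
    have hx := abs_sub_le p.1 (F j).1 q.1
    have hy := abs_sub_le p.2 (F j).2 q.2
    unfold dist1 at heq
    have hxe : |p.1 - (F j).1| + |(F j).1 - q.1| = |p.1 - q.1| := by linarith
    have hye : |p.2 - (F j).2| + |(F j).2 - q.2| = |p.2 - q.2| := by linarith
    obtain ⟨b1, b2⟩ := between_of_abs_eq hxe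
    obtain ⟨b3, b4⟩ := between_of_abs_eq hye
    exact ⟨b1, b2, b3, b4⟩
  -- straddling index via max'
  classical
  set SS := (Finset.range (n+1)).filter (fun j => (F j).1 ≤ μ) with hSS
  have h0S : 0 ∈ SS := by
    simp [hSS, Finset.mem_filter, hF0]
    exact le_of_lt hp
  have hne : SS.Nonempty := ⟨0, h0S⟩
  set jm := SS.max' hne with hjm
  have hjmS : jm ∈ SS := SS.max'_mem hne
  have hjmle : jm ≤ n := by
    have := (Finset.mem_filter.mp hjmS).1
    simp at this; omega
  have hjmx : (F jm).1 ≤ μ := (Finset.mem_filter.mp hjmS).2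
  have hjmn : jm ≠ n := by
    intro hcontra
    rw [hcontra, hFn] at hjmx
    linarith
  have hjmlt : jm < n := by omega
  have hnext : ¬ (F (jm+1)).1 ≤ μ := by
    intro hc
    have : jm + 1 ∈ SS := by
      simp [hSS, Finset.mem_filter]
      exact ⟨by omega, hc⟩
    have := SS.le_max' _ this
    omega
  exact ⟨F jm, F (jm+1), hFmem jm, hFmem (jm+1), hcons jm hjmlt, hjmx,
    le_of_lt (lt_of_not_ge hnext), hrect jm hjmle, hrect (jm+1) hjmlt⟩




open Finset in
lemma row_lemma {ι : Type*} [DecidableEq ι] (T : Finset ι) (bl bh μ eL eR : ι → ℝ)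
    (A : Finset ℝ)
    (hLE : ∀ d ∈ T, bl d ≤ eL d ∧ eL d ≤ μ d ∧ μ d ≤ eR d ∧ eR d ≤ bh d)
    (hA : ∀ d ∈ T, eL d ∈ A ∧ eR d ∈ A)
    (hpair : ∀ d ∈ T, ∀ d' ∈ T, d ≠ d' →
      bh d' < bl d ∨ bh d < bl d' ∨
      (bl d ≤ bl d' ∧ bh d' < μ d) ∨ (μ d < bl d' ∧ bh d' ≤ bh d) ∨
      (bl d' ≤ bl d ∧ bh d < μ d') ∨ (μ d' < bl d ∧ bh d ≤ bh d')) :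
    T.card ≤ 2 * A.card := by
  classical
  have hμ : ∀ d ∈ T, bl d ≤ μ d ∧ μ d ≤ bh d := by
    intro d hd
    obtain ⟨a, b, c, e⟩ := hLE d hd
    exact ⟨le_trans a b, le_trans c e⟩
  set ltL : ι → ι → Prop := fun d' d => bl d ≤ bl d' ∧ bh d' < μ d with hltL
  set ltR : ι → ι → Prop := fun d' d => μ d < bl d' ∧ bh d' ≤ bh d with hltR
  set lt : ι → ι → Prop := fun d' d => ltL d' d ∨ ltR d' d with hlt
  have hsub : ∀ d ∈ T, ∀ d', lt d' d → bl d ≤ bl d' ∧ bh d' ≤ bh d := by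
    intro d hd d' h
    rcases h with ⟨h1, h2⟩ | ⟨h1, h2⟩
    · exact ⟨h1, le_trans (le_of_lt h2) (hμ d hd).2⟩
    · exact ⟨le_trans (hμ d hd).1 (le_of_lt h1), h2⟩
  have htrans : ∀ c ∈ T, ∀ b ∈ T, ∀ a, lt a b → lt b c → lt a c := by
    intro c hc b hb a hab hbc
    have hsab := hsub b hb a hab
    rcases hbc with ⟨h1, h2⟩ | ⟨h1, h2⟩
    · exact Or.inl ⟨le_trans h1 hsab.1, lt_of_le_of_lt hsab.2 h2⟩
    · exact Or.inr ⟨lt_of_lt_of_le h1 hsab.1, le_trans hsab.2 h2⟩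
  have hwidth : ∀ d ∈ T, ∀ d' ∈ T, lt d' d → bh d' - bl d' < bh d - bl d := by
    intro d hd d' hd' h
    rcases h with ⟨h1, h2⟩ | ⟨h1, h2⟩
    · have := (hμ d hd).2
      linarith
    · have := (hμ d hd).1
      linarith
  have hrefine : ∀ d ∈ T, ∀ (side : Bool),
      (∃ u ∈ T, if side then ltL u d else ltR u d) →
      ∃ w ∈ T, (∀ v ∈ T, ¬ lt v w) ∧ (if side then ltL w d else ltR w d) := by
    intro d hd side hex
    obtain ⟨u0, hu0T, hu0⟩ := hex
    set S := T.filter (fun u => if side then ltL u d else ltR u d) with hS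
    have hSne : S.Nonempty := ⟨u0, by simp only [hS, Finset.mem_filter]; exact ⟨hu0T, hu0⟩⟩
    obtain ⟨w, hwS, hwmin⟩ := S.exists_min_image (fun u => bh u - bl u) hSne
    have hwT : w ∈ T := (Finset.mem_filter.mp hwS).1
    have hwL : if side then ltL w d else ltR w d := (Finset.mem_filter.mp hwS).2
    refine ⟨w, hwT, ?_, hwL⟩
    intro v hv hvw
    have hvL : if side then ltL v d else ltR v d := by
      have hwd : lt w d := by
        cases side
        · exact Or.inr (by simpa using hwL)
        · exact Or.inl (by simpa using hwL)
      have h1 := htrans d hd w hwT v hvw hwd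
      have hs := hsub w hwT v hvw
      have hμv := hμ v hv
      cases side with
      | true =>
        simp only [if_true] at hwL ⊢
        rcases h1 with h1 | h1
        · exact h1
        · exfalso
          -- bl v > μ d  but bh v ≤ bh w < μ d
          have : bh w < μ d := by simpa using hwL.2
          linarith [h1.1, hs.2, hμv.1, hμv.2]
      | false =>
        simp only [Bool.false_eq_true, if_false] at hwL ⊢
        rcases h1 with h1 | h1
        · exfalso
          have : μ d < bl w := by simpa using hwL.1
          linarith [h1.2, hs.1, hμv.1, hμv.2]
        · exact h1
    have hvS : v ∈ S := Finset.mem_filter.mpr ⟨hv, hvL⟩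
    have := hwmin v hvS
    have := hwidth w hwT v hv hvw
    linarith
  -- the partition
  set isMin : ι → Prop := fun d => ∀ d' ∈ T, ¬ lt d' d with hisMin
  set Branch := T.filter (fun d => (∃ d1 ∈ T, ltL d1 d) ∧ (∃ d2 ∈ T, ltR d2 d)) with hBr
  set NB := T.filter (fun d => ¬ ((∃ d1 ∈ T, ltL d1 d) ∧ (∃ d2 ∈ T, ltR d2 d))) with hNB
  have hcardsplit : Branch.card + NB.card = T.card :=
    Finset.card_filter_add_card_filter_not _
  -- φ injective on NB
  set φ : ι → ℝ := fun d => if ∃ d1 ∈ T, ltL d1 d then eR d else eL d with hφ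
  have hφmem : ∀ d ∈ T, φ d ∈ A := by
    intro d hd
    by_cases h : ∃ d1 ∈ T, ltL d1 d <;> simp only [hφ, h, if_true, if_false, reduceIte] <;>
      [exact (hA d hd).2; exact (hA d hd).1]
  have hφbounds : ∀ d ∈ T, bl d ≤ φ d ∧ φ d ≤ bh d := by
    intro d hd
    obtain ⟨a, b, c, e⟩ := hLE d hd
    by_cases h : ∃ d1 ∈ T, ltL d1 d <;> simp only [hφ, h, reduceIte] <;> constructor <;> linarith
  have hφinj : ∀ d ∈ NB, ∀ d' ∈ NB, φ d = φ d' → d = d' := by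
    intro d hd d' hd'
    have hdT : d ∈ T := (Finset.mem_filter.mp hd).1
    have hd'T : d' ∈ T := (Finset.mem_filter.mp hd').1
    have hdnb := (Finset.mem_filter.mp hd).2
    have hd'nb := (Finset.mem_filter.mp hd').2
    intro heq
    by_contra hne
    have hb1 := hφbounds d hdT
    have hb2 := hφbounds d' hd'T
    -- case analysis on the pair relation
    -- a helper: if d' is a (left/right) minor of d, get a contradiction
    have key : ∀ a ∈ NB, ∀ b ∈ NB, φ a = φ b → lt b a → False := by
      intro a ha b hb hfab hlt
      have haT : a ∈ T := (Finset.mem_filter.mp ha).1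
      have hbT : b ∈ T := (Finset.mem_filter.mp hb).1
      have hanb := (Finset.mem_filter.mp ha).2
      have hbb := hφbounds b hbT
      obtain ⟨l1, l2, l3, l4⟩ := hLE a haT
      rcases hlt with hL | hR
      · -- b is a left-minor of a, so φ a = eR a ≥ μ a; but φ a = φ b ≤ bh b < μ a
        have : φ a = eR a := if_pos ⟨b, hbT, hL⟩
        rw [hfab] at this
        -- φ b ≤ bh b < μ a ≤ eR a = φ b
        linarith [hbb.2, hL.2, this ▸ l3]
      · -- b is a right-minor of a; a ∈ NB so a has no left-minor, hence φ a = eL a ≤ μ a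
        have hnoL : ¬ ∃ d1 ∈ T, ltL d1 a := by
          intro hexL
          exact hanb ⟨hexL, ⟨b, hbT, hR⟩⟩
        have : φ a = eL a := if_neg hnoL
        rw [hfab] at this
        -- φ b ≥ bl b > μ a ≥ eL a = φ b
        linarith [hbb.1, hR.1, this ▸ l2]
    rcases hpair d hdT d' hd'T hne with h | h | h | h | h | h
    · linarith [hb1.1, hb2.2, heq]
    · linarith [hb1.2, hb2.1, heq]
    · exact key d hd d' hd' heq (Or.inl h)
    · exact key d hd d' hd' heq (Or.inr h)
    · exact key d' hd' d hd heq.symm (Or.inl h)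
    · exact key d' hd' d hd heq.symm (Or.inr h)
  have hNBcard : NB.card ≤ A.card := by
    apply Finset.card_le_card_of_injOn φ
    · intro d hd; exact hφmem d (Finset.mem_filter.mp hd).1
    · intro a ha b hb hab; exact hφinj a ha b hb hab
  -- Min as a finset
  set MinF := T.filter (fun d => ∀ d' ∈ T, ¬ lt d' d) with hMinF
  have hMinNB : MinF ⊆ NB := by
    intro d hd
    obtain ⟨hdT, hmin⟩ := Finset.mem_filter.mp hd
    apply Finset.mem_filter.mpr
    refine ⟨hdT, ?_⟩
    rintro ⟨⟨d1, hd1T, hd1⟩, -⟩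
    exact hmin d1 hd1T (Or.inl hd1)
  -- ψ : Branch → MinF
  have hψex : ∀ d ∈ Branch, ∃ w, (w ∈ MinF ∧ ltL w d) ∧
      ∀ w' , (w' ∈ MinF ∧ ltL w' d) → bh w' ≤ bh w := by
    intro d hd
    have hmemd := Finset.mem_filter.mp hd
    have hdT := hmemd.1
    have hexL := hmemd.2.1
    have hexR := hmemd.2.2
    set M := MinF.filter (fun w => ltL w d) with hM
    have hMne : M.Nonempty := by
      obtain ⟨w, hwT, hwmin, hwL⟩ := hrefine d hdT true (by simpa using hexL)
      exact ⟨w, by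
        simp only [hM, Finset.mem_filter, hMinF]
        exact ⟨⟨hwT, hwmin⟩, by simpa using hwL⟩⟩
    obtain ⟨w, hwM, hwmax⟩ := M.exists_max_image bh hMne
    refine ⟨w, ?_, ?_⟩
    · have := Finset.mem_filter.mp hwM
      exact ⟨this.1, this.2⟩
    · intro w' hw'
      exact hwmax w' (Finset.mem_filter.mpr ⟨hw'.1, hw'.2⟩)
  set ψ : ι → ι := fun d => if h : ∃ w, (w ∈ MinF ∧ ltL w d) ∧
      ∀ w', (w' ∈ MinF ∧ ltL w' d) → bh w' ≤ bh w then Classical.choose h else d with hψ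
  have hψspec : ∀ d ∈ Branch, (ψ d ∈ MinF ∧ ltL (ψ d) d) ∧
      ∀ w', (w' ∈ MinF ∧ ltL w' d) → bh w' ≤ bh (ψ d) := by
    intro d hd
    have h := hψex d hd
    simp only [hψ, dif_pos h]
    exact Classical.choose_spec h
  have hψinj : ∀ d ∈ Branch, ∀ d' ∈ Branch, ψ d = ψ d' → d = d' := by
    intro d hd d' hd' heq
    by_contra hne
    obtain ⟨⟨hwMin, hwL⟩, hwmax⟩ := hψspec d hd
    obtain ⟨⟨hw'Min, hw'L⟩, hw'max⟩ := hψspec d' hd'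
    rw [heq] at hwMin hwL hwmax
    set w := ψ d' with hwdef
    have hdT : d ∈ T := (Finset.mem_filter.mp hd).1
    have hd'T : d' ∈ T := (Finset.mem_filter.mp hd').1
    have hwT : w ∈ T := (Finset.mem_filter.mp hwMin).1
    have hwμ := hμ w hwT
    -- w is a common left-minor
    rcases hpair d hdT d' hd'T hne with h | h | h | h | h | h
    · -- disjoint : bh d' < bl d ; but bl d ≤ bl w and bh w < μ d' ≤ bh d'
      have h1 : bl d ≤ bl w := hwL.1
      have h2 : bh w < μ d' := hw'L.2
      linarith [hwμ.1, hwμ.2, (hμ d' hd'T).2]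
    · have h1 : bl d' ≤ bl w := hw'L.1
      have h2 : bh w < μ d := hwL.2
      linarith [hwμ.1, hwμ.2, (hμ d hdT).2]
    · -- ltL d' d : d' inside left side of d
      -- d' branching: get u ∈ MinF with ltR u d'; then u ∈ M_d with bh u > bh w: contra
      have hexR' := (Finset.mem_filter.mp hd').2.2
      obtain ⟨u, huT, humin, huR⟩ := hrefine d' hd'T false (by simpa using hexR')
      simp only [if_false, Bool.false_eq_true, reduceIte] at huR
      have huMin : u ∈ MinF := Finset.mem_filter.mpr ⟨huT, humin⟩
      have huLd : ltL u d := by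
        constructor
        · linarith [h.1, huR.1, (hμ d' hd'T).1]
        · linarith [huR.2, h.2]
      have hle := hwmax u ⟨huMin, huLd⟩
      -- but bh u ≥ bl u > μ d' > bh w
      have : μ d' < bl u := huR.1
      linarith [hw'L.2, (hμ u huT).1, (hμ u huT).2]
    · -- ltR d' d : d' inside right side of d: w ≤ d' has bl w ≥ bl d' > μ d, but ltL w d: bh w < μ d
      have h1 : bl d' ≤ bl w := hw'L.1
      linarith [h.1, hwL.2, hwμ.1, hwμ.2]
    · -- symmetric: ltL d d'
      have hexRd := (Finset.mem_filter.mp hd).2.2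
      obtain ⟨u, huT, humin, huR⟩ := hrefine d hdT false (by simpa using hexRd)
      simp only [if_false, Bool.false_eq_true, reduceIte] at huR
      have huMin : u ∈ MinF := Finset.mem_filter.mpr ⟨huT, humin⟩
      have huLd : ltL u d' := by
        constructor
        · linarith [h.1, huR.1, (hμ d hdT).1]
        · linarith [huR.2, h.2]
      have hle := hw'max u ⟨huMin, huLd⟩
      have : μ d < bl u := huR.1
      linarith [hwL.2, (hμ u huT).1, (hμ u huT).2]
    · have h1 : bl d ≤ bl w := hwL.1
      linarith [h.1, hw'L.2, hwμ.1, hwμ.2]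
  have hBranchcard : Branch.card ≤ MinF.card := by
    apply Finset.card_le_card_of_injOn ψ
    · intro d hd; exact (hψspec d hd).1.1
    · intro a ha b hb hab; exact hψinj a ha b hb hab
  have hMinCard : MinF.card ≤ NB.card := Finset.card_le_card hMinNB
  omega


section
variable (k : ℕ)

abbrev SIdx := (_ : ℕ) × ℕ

def hh (σ : SIdx) : ℕ := 2^(k-1-σ.1)
def KK (σ : SIdx) : ℕ := revBits k σ.2
def blN (σ : SIdx) : ℕ := 2 * hh k σ * (KK k σ / (2 * hh k σ))
def bhN (σ : SIdx) : ℕ := blN k σ + 2 * hh k σ - 1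

def Tf : Finset SIdx :=
  (Finset.range k).sigma (fun ℓ => (Finset.range (2^k)).filter (fun t => t / 2^ℓ % 2 = 0))

lemma mem_Tf {σ : SIdx} : σ ∈ Tf k ↔ σ.1 < k ∧ σ.2 < 2^k ∧ σ.2 / 2^σ.1 % 2 = 0 := by
  unfold Tf
  rcases σ with ⟨ℓ, t⟩
  simp [Finset.mem_sigma, Finset.mem_filter, Finset.mem_range, and_assoc]

lemma mod_pow_succ_eq {ℓ t : ℕ} (h : t / 2^ℓ % 2 = 0) : t % 2^(ℓ+1) = t % 2^ℓ := by
  have h1 : t % (2^ℓ * 2) = t % 2^ℓ + 2^ℓ * (t / 2^ℓ % 2) := Nat.mod_mul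
  rw [h] at h1
  rw [pow_succ]
  omega

lemma time_add_lt {ℓ t : ℕ} (hℓ : ℓ < k) (ht : t < 2^k) (hb : t / 2^ℓ % 2 = 0) :
    t + 2^ℓ < 2^k := by
  by_contra hcon
  push_neg at hcon
  set m := k - ℓ with hm
  have hm1 : 1 ≤ m := by omega
  have hk : k = ℓ + m := by omega
  have hpow : (2:ℕ)^k = 2^ℓ * 2^m := by rw [hk, pow_add]
  have hlt : t / 2^ℓ < 2^m := Nat.div_lt_of_lt_mul (by rw [← hpow]; exact ht)
  have hge : 2^m - 1 ≤ t / 2^ℓ := by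
    apply Nat.le_div_iff_mul_le (Nat.two_pow_pos ℓ) |>.mpr
    have h2ℓ : (1:ℕ) ≤ 2^ℓ := Nat.one_le_two_pow
    have h2m : (1:ℕ) ≤ 2^m := Nat.one_le_two_pow
    calc (2^m - 1) * 2^ℓ = 2^ℓ * 2^m - 2^ℓ := by
          rw [Nat.sub_mul, one_mul, mul_comm]
      _ = 2^k - 2^ℓ := by rw [hpow]
      _ ≤ t := by omega
  have heq : t / 2^ℓ = 2^m - 1 := by omega
  have hodd : (2:ℕ) ∣ 2^m := dvd_pow_self 2 (by omega)
  rw [heq] at hb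
  omega

lemma blk_facts {σ : SIdx} (hσ : σ ∈ Tf k) :
    KK k σ % (2 * hh k σ) < hh k σ ∧
    blN k σ ≤ KK k σ ∧
    KK k σ + hh k σ ≤ bhN k σ ∧
    2 * hh k σ ∣ blN k σ := by
  obtain ⟨hℓ, ht, hb⟩ := (mem_Tf k).mp hσ
  have hhh : 2 * hh k σ = 2^(k - σ.1) := by
    unfold hh
    rw [← pow_succ']
    congr 1
    omega
  have h1 : KK k σ % (2 * hh k σ) < hh k σ := by
    rw [hhh]
    exact revBits_mod_lt k σ.1 σ.2 hℓ hb
  have hpos : 0 < 2 * hh k σ := by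
    unfold hh
    positivity
  have hdm := Nat.div_add_mod (KK k σ) (2 * hh k σ)
  have hh1 : 1 ≤ hh k σ := Nat.one_le_two_pow
  refine ⟨h1, ?_, ?_, ?_⟩
  · unfold blN; omega
  · unfold bhN blN; omega
  · exact Dvd.intro _ rfl


lemma dyadic_cases {H a b c B B' L : ℕ} (hH : 0 < H) (hL : L = H * c) (hB : B = H * a)
    (hB' : B' = H * b) :
    (B' + H ≤ B) ∨ (B + 2*L ≤ B') ∨ (B ≤ B' ∧ B' + H ≤ B + L) ∨
    (B + L ≤ B' ∧ B' + H ≤ B + 2*L) := by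
  subst hL hB hB'
  rcases le_or_gt (b+1) a with h | h
  · left
    calc H * b + H = H * (b+1) := by ring
      _ ≤ H * a := Nat.mul_le_mul_left _ h
  rcases le_or_gt (a + 2*c) b with h2 | h2
  · right; left
    calc H * a + 2 * (H * c) = H * (a + 2*c) := by ring
      _ ≤ H * b := Nat.mul_le_mul_left _ h2
  rcases le_or_gt (a + c) b with h3 | h3
  · right; right; right
    constructor
    · calc H * a + H * c = H * (a+c) := by ring
        _ ≤ H * b := Nat.mul_le_mul_left _ h3
    · calc H * b + H = H * (b+1) := by ring
        _ ≤ H * (a + 2*c) := Nat.mul_le_mul_left _ h2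
        _ = H * a + 2 * (H*c) := by ring
  · right; right; left
    constructor
    · exact Nat.mul_le_mul_left _ (by omega)
    · calc H * b + H = H * (b+1) := by ring
        _ ≤ H * (a + c) := Nat.mul_le_mul_left _ h3
        _ = H * a + H * c := by ring

/-- the dyadic side/disjointness fact, asymmetric version for levels ℓ < ℓ' -/
lemma pair_lt {σ σ' : SIdx} (hσ : σ ∈ Tf k) (hσ' : σ' ∈ Tf k) (hlev : σ.1 < σ'.1) :
    (bhN k σ' < blN k σ) ∨ (bhN k σ < blN k σ') ∨
    (blN k σ ≤ blN k σ' ∧ bhN k σ' + 1 ≤ blN k σ + hh k σ) ∨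
    (blN k σ + hh k σ ≤ blN k σ' ∧ bhN k σ' ≤ bhN k σ) := by
  obtain ⟨hℓ, ht, hb⟩ := (mem_Tf k).mp hσ
  obtain ⟨hℓ', ht', hb'⟩ := (mem_Tf k).mp hσ'
  obtain ⟨-, -, -, hdvd⟩ := blk_facts k hσ
  obtain ⟨-, -, -, hdvd'⟩ := blk_facts k hσ'
  have hh1 : 1 ≤ hh k σ := Nat.one_le_two_pow
  have hh1' : 1 ≤ hh k σ' := Nat.one_le_two_pow
  have hdvdh : 2 * hh k σ' ∣ hh k σ := by
    unfold hh
    rw [← pow_succ']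
    apply pow_dvd_pow
    omega
  obtain ⟨c, hc⟩ := hdvdh
  obtain ⟨a0, ha0⟩ := hdvd
  have hblm : ∃ a, blN k σ = 2 * hh k σ' * a := by
    refine ⟨2 * c * a0, ?_⟩
    rw [ha0, hc]; ring
  obtain ⟨a, ha⟩ := hblm
  obtain ⟨b0, hb0⟩ := hdvd'
  have hbhσ : bhN k σ = blN k σ + 2 * hh k σ - 1 := rfl
  have hbhσ' : bhN k σ' = blN k σ' + 2 * hh k σ' - 1 := rfl
  have hHpos : 0 < 2 * hh k σ' := by omega
  rcases dyadic_cases hHpos hc ha hb0 with h | h | h | h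
  · left; omega
  · right; left; omega
  · right; right; left; omega
  · right; right; right; omega


lemma pair_eq {σ σ' : SIdx} (hσ : σ ∈ Tf k) (hσ' : σ' ∈ Tf k) (hlev : σ.1 = σ'.1)
    (hne : σ ≠ σ') (hov1 : σ'.2 ≤ σ.2 + 2^σ.1) (hov2 : σ.2 ≤ σ'.2 + 2^σ'.1) :
    bhN k σ' < blN k σ ∨ bhN k σ < blN k σ' := by
  obtain ⟨hℓ, ht, hb⟩ := (mem_Tf k).mp hσ
  obtain ⟨hℓ', ht', hb'⟩ := (mem_Tf k).mp hσ'
  have hhe : hh k σ = hh k σ' := by unfold hh; rw [hlev]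
  have hH : 2 * hh k σ = 2^(k - σ.1) := by
    unfold hh; rw [← pow_succ']; congr 1; omega
  have htne : σ.2 ≠ σ'.2 := by
    intro hcontra
    exact hne (Sigma.ext hlev (by rw [hcontra]))
  have hqq : KK k σ / (2 * hh k σ) ≠ KK k σ' / (2 * hh k σ) := by
    intro heq
    -- same block: times agree mod 2^(ℓ+1), contradiction with overlap
    have h1 : revBits σ.1 (σ.2 % 2^σ.1) = revBits σ.1 (σ'.2 % 2^σ.1) := by
      have e1 := revBits_div k σ.1 σ.2 (le_of_lt hℓ)
      have e2 := revBits_div k σ.1 σ'.2 (le_of_lt hℓ)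
      rw [← e1, ← e2]
      unfold KK at heq
      rw [hH] at heq
      exact heq
    have h2 : σ.2 % 2^σ.1 = σ'.2 % 2^σ.1 :=
      revBits_inj σ.1 _ _ (Nat.mod_lt _ (Nat.two_pow_pos _))
        (Nat.mod_lt _ (Nat.two_pow_pos _)) h1
    have h3 : σ.2 % 2^(σ.1+1) = σ'.2 % 2^(σ.1+1) := by
      rw [mod_pow_succ_eq hb, mod_pow_succ_eq (by rw [← hlev] at hb'; exact hb'), h2]
    have h4 : (2:ℕ)^(σ.1+1) = 2^σ.1 + 2^σ.1 := by rw [pow_succ]; ring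
    have hpe : (2:ℕ)^σ'.1 = 2^σ.1 := by rw [hlev]
    rcases Nat.lt_or_ge σ.2 σ'.2 with hlt | hge
    · have hdvd : 2^(σ.1+1) ∣ σ'.2 - σ.2 := (Nat.modEq_iff_dvd' (le_of_lt hlt)).mp h3
      have := Nat.le_of_dvd (by omega) hdvd
      omega
    · have hlt : σ'.2 < σ.2 := by omega
      have hdvd : 2^(σ.1+1) ∣ σ.2 - σ'.2 := (Nat.modEq_iff_dvd' (le_of_lt hlt)).mp h3.symm
      have := Nat.le_of_dvd (by omega) hdvd
      omega
  have hbl : blN k σ = 2 * hh k σ * (KK k σ / (2 * hh k σ)) := rfl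
  have hbl' : blN k σ' = 2 * hh k σ * (KK k σ' / (2 * hh k σ)) := by
    unfold blN
    rw [hhe]
  have hbh : bhN k σ = blN k σ + 2 * hh k σ - 1 := rfl
  have hbh' : bhN k σ' = blN k σ' + 2 * hh k σ' - 1 := rfl
  have hh1 : 1 ≤ hh k σ := Nat.one_le_two_pow
  set q := KK k σ / (2 * hh k σ)
  set q' := KK k σ' / (2 * hh k σ)
  rcases Nat.lt_or_ge q q' with h | h
  · right
    have h5 : 2 * hh k σ * (q + 1) ≤ 2 * hh k σ * q' := Nat.mul_le_mul_left _ h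
    have h6 : 2 * hh k σ * (q + 1) = 2 * hh k σ * q + 2 * hh k σ := by ring
    rw [← hhe] at hbh'
    omega
  · left
    have hlt : q' < q := by omega
    have h5 : 2 * hh k σ * (q' + 1) ≤ 2 * hh k σ * q := Nat.mul_le_mul_left _ hlt
    have h6 : 2 * hh k σ * (q' + 1) = 2 * hh k σ * q' + 2 * hh k σ := by ring
    rw [← hhe] at hbh'
    omega

noncomputable def muR (σ : SIdx) : ℝ := (blN k σ : ℝ) + (hh k σ : ℝ) - 1/2

lemma pair_main {σ σ' : SIdx} (hσ : σ ∈ Tf k) (hσ' : σ' ∈ Tf k) (hne : σ ≠ σ')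
    (hov1 : σ'.2 ≤ σ.2 + 2^σ.1) (hov2 : σ.2 ≤ σ'.2 + 2^σ'.1) :
    ((bhN k σ' : ℝ) < blN k σ) ∨ ((bhN k σ : ℝ) < blN k σ') ∨
    (((blN k σ : ℝ) ≤ blN k σ') ∧ ((bhN k σ' : ℝ) < muR k σ)) ∨
    ((muR k σ < blN k σ') ∧ ((bhN k σ' : ℝ) ≤ bhN k σ)) ∨
    (((blN k σ' : ℝ) ≤ blN k σ) ∧ ((bhN k σ : ℝ) < muR k σ')) ∨
    ((muR k σ' < blN k σ) ∧ ((bhN k σ : ℝ) ≤ bhN k σ')) := by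
  have hh1 : (1:ℝ) ≤ (hh k σ : ℝ) := by exact_mod_cast Nat.one_le_two_pow
  have hh1' : (1:ℝ) ≤ (hh k σ' : ℝ) := by exact_mod_cast Nat.one_le_two_pow
  rcases lt_trichotomy σ.1 σ'.1 with hc | hc | hc
  · rcases pair_lt k hσ hσ' hc with h | h | h | h
    · exact Or.inl (by exact_mod_cast h)
    · exact Or.inr (Or.inl (by exact_mod_cast h))
    · refine Or.inr (Or.inr (Or.inl ⟨by exact_mod_cast h.1, ?_⟩))
      have : (bhN k σ' : ℝ) + 1 ≤ (blN k σ : ℝ) + (hh k σ : ℝ) := by exact_mod_cast h.2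
      unfold muR
      linarith
    · refine Or.inr (Or.inr (Or.inr (Or.inl ⟨?_, by exact_mod_cast h.2⟩)))
      have : (blN k σ : ℝ) + (hh k σ : ℝ) ≤ (blN k σ' : ℝ) := by exact_mod_cast h.1
      unfold muR
      linarith
  · rcases pair_eq k hσ hσ' hc hne hov1 hov2 with h | h
    · exact Or.inl (by exact_mod_cast h)
    · exact Or.inr (Or.inl (by exact_mod_cast h))
  · rcases pair_lt k hσ' hσ hc with h | h | h | h
    · exact Or.inr (Or.inl (by exact_mod_cast h))
    · exact Or.inl (by exact_mod_cast h)
    · refine Or.inr (Or.inr (Or.inr (Or.inr (Or.inl ⟨by exact_mod_cast h.1, ?_⟩))))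
      have : (bhN k σ : ℝ) + 1 ≤ (blN k σ' : ℝ) + (hh k σ' : ℝ) := by exact_mod_cast h.2
      unfold muR
      linarith
    · refine Or.inr (Or.inr (Or.inr (Or.inr (Or.inr ⟨?_, by exact_mod_cast h.2⟩))))
      have : (blN k σ' : ℝ) + (hh k σ' : ℝ) ≤ (blN k σ : ℝ) := by exact_mod_cast h.1
      unfold muR
      linarith

lemma cnt (ℓ : ℕ) (hℓ : ℓ < k) :
    ((Finset.range (2^k)).filter (fun t => t / 2^ℓ % 2 = 0)).card = 2^(k-1) := by
  have hcard : ((Finset.range (2^k)).filter (fun t => t / 2^ℓ % 2 = 0)).card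
      = ((Finset.range (2^ℓ)) ×ˢ (Finset.range (2^(k-1-ℓ)))).card := by
    apply Finset.card_bij' (fun t _ => (t % 2^ℓ, t / 2^(ℓ+1)))
      (fun p _ => p.2 * 2^(ℓ+1) + p.1)
    · intro t ht
      obtain ⟨htr, htc⟩ := Finset.mem_filter.mp ht
      dsimp only
      have h1 : t % 2^(ℓ+1) = t % 2^ℓ := mod_pow_succ_eq htc
      have h2 := Nat.div_add_mod t (2^(ℓ+1))
      have h3 : (t / 2^(ℓ+1)) * 2^(ℓ+1) = 2^(ℓ+1) * (t / 2^(ℓ+1)) := mul_comm _ _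
      omega
    · intro p hp
      obtain ⟨h1, h2⟩ := Finset.mem_product.mp hp
      rw [Finset.mem_range] at h1 h2
      have he : p.2 * 2^(ℓ+1) + p.1 = (2 * p.2) * 2^ℓ + p.1 := by rw [pow_succ]; ring
      have hmod : (p.2 * 2^(ℓ+1) + p.1) % 2^ℓ = p.1 := by
        rw [he, add_comm, Nat.add_mul_mod_self_right]
        exact Nat.mod_eq_of_lt h1
      have hdiv : (p.2 * 2^(ℓ+1) + p.1) / 2^(ℓ+1) = p.2 := by
        rw [add_comm, Nat.add_mul_div_right _ _ (Nat.two_pow_pos _),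
          Nat.div_eq_of_lt (lt_of_lt_of_le h1 (Nat.pow_le_pow_right (by norm_num) (by omega)))]
        omega
      exact Prod.ext_iff.mpr ⟨hmod, hdiv⟩

    · intro t ht
      obtain ⟨htr, htc⟩ := Finset.mem_filter.mp ht
      rw [Finset.mem_range] at htr
      apply Finset.mem_product.mpr
      constructor
      · simp [Finset.mem_range]
        exact Nat.mod_lt _ (Nat.two_pow_pos _)
      · simp [Finset.mem_range]
        apply Nat.div_lt_of_lt_mul
        calc t < 2^k := htr
          _ = 2^(ℓ+1) * 2^(k-1-ℓ) := by rw [← pow_add]; congr 1; omega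
    · intro p hp
      obtain ⟨h1, h2⟩ := Finset.mem_product.mp hp
      rw [Finset.mem_range] at h1 h2
      apply Finset.mem_filter.mpr
      constructor
      · rw [Finset.mem_range]
        calc p.2 * 2^(ℓ+1) + p.1 < p.2 * 2^(ℓ+1) + 2^(ℓ+1) := by
              have : p.1 < 2^(ℓ+1) := lt_of_lt_of_le h1 (Nat.pow_le_pow_right (by norm_num) (by omega))
              omega
          _ = (p.2 + 1) * 2^(ℓ+1) := by ring
          _ ≤ 2^(k-1-ℓ) * 2^(ℓ+1) := Nat.mul_le_mul_right _ h2
          _ = 2^k := by rw [← pow_add]; congr 1; omega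
      · have he2 : p.2 * 2^(ℓ+1) + p.1 = p.1 + (2 * p.2) * 2^ℓ := by
          rw [pow_succ]; ring
        rw [he2, Nat.add_mul_div_right _ _ (Nat.two_pow_pos _),
          Nat.div_eq_of_lt h1, zero_add]
        simp [Nat.mul_mod_right]
  rw [hcard, Finset.card_product, Finset.card_range, Finset.card_range, ← pow_add]
  congr 1
  omega

end


section Monster

variable (k : ℕ)

def zPt (t : ℕ) : Pt := ((revBits k t : ℝ), (t : ℝ))

def demF (σ : SIdx) : Dem :=
  (((KK k σ : ℝ), (σ.2 : ℝ)), (((KK k σ + hh k σ : ℕ) : ℝ), ((σ.2 + 2^σ.1 : ℕ) : ℝ)))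

def Pf : Finset Pt := (Finset.range (2^k)).image (zPt k)

def Df : Finset Dem := (Tf k).image (demF k)

lemma hh_pos_real {σ : SIdx} : (1:ℝ) ≤ (hh k σ : ℝ) := by
  exact_mod_cast (Nat.one_le_two_pow : 1 ≤ 2^(k-1-σ.1))

lemma bh_real {σ : SIdx} : (bhN k σ : ℝ) = (blN k σ : ℝ) + 2 * (hh k σ : ℝ) - 1 := by
  have h1 : 1 ≤ 2 * hh k σ := by
    have : (1:ℕ) ≤ hh k σ := Nat.one_le_two_pow
    omega
  have h2 : bhN k σ + 1 = blN k σ + 2 * hh k σ := by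
    unfold bhN
    omega
  have h3 : ((bhN k σ : ℕ) : ℝ) + 1 = ((blN k σ : ℕ) : ℝ) + 2 * ((hh k σ : ℕ) : ℝ) := by
    exact_mod_cast h2
  linarith

lemma mu_facts {σ : SIdx} (hσ : σ ∈ Tf k) :
    ((KK k σ : ℝ) < muR k σ) ∧ (muR k σ < (KK k σ : ℝ) + (hh k σ : ℝ)) ∧
    ((blN k σ : ℝ) ≤ (KK k σ : ℝ)) ∧ ((KK k σ : ℝ) + (hh k σ : ℝ) ≤ (bhN k σ : ℝ)) ∧
    ((blN k σ : ℝ) ≤ muR k σ) ∧ (muR k σ ≤ (bhN k σ : ℝ)) := by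
  obtain ⟨hmod, hble, hkh, -⟩ := blk_facts k hσ
  have hdm : blN k σ + KK k σ % (2 * hh k σ) = KK k σ := Nat.div_add_mod _ _
  have hK1 : KK k σ + 1 ≤ blN k σ + hh k σ := by omega
  have hc1 : ((KK k σ : ℝ) + 1 ≤ (blN k σ : ℝ) + (hh k σ : ℝ)) := by exact_mod_cast hK1
  have hc2 : ((blN k σ : ℝ) ≤ (KK k σ : ℝ)) := by exact_mod_cast hble
  have hc3 : ((KK k σ : ℝ) + (hh k σ : ℝ) ≤ (bhN k σ : ℝ)) := by exact_mod_cast hkh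
  have hc4 := bh_real k (σ := σ)
  have hc5 := hh_pos_real k (σ := σ)
  unfold muR
  refine ⟨by linarith, by linarith, hc2, hc3, by linarith, by linarith⟩

/-- the endpoints of the demand of `σ` -/
lemma demF_fst {σ : SIdx} : (demF k σ).1 = zPt k σ.2 := rfl

lemma demF_snd {σ : SIdx} (hσ : σ ∈ Tf k) : (demF k σ).2 = zPt k (σ.2 + 2^σ.1) := by
  obtain ⟨hℓ, ht, hb⟩ := (mem_Tf k).mp hσ
  unfold demF zPt
  have : revBits k (σ.2 + 2^σ.1) = KK k σ + hh k σ := by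
    rw [revBits_add_pow k σ.1 σ.2 hℓ hb]
    rfl
  rw [this]

lemma Df_mem {σ : SIdx} (hσ : σ ∈ Tf k) : demF k σ ∈ Df k := Finset.mem_image_of_mem _ hσ

lemma Pf_mem {t : ℕ} (ht : t < 2^k) : zPt k t ∈ Pf k :=
  Finset.mem_image_of_mem _ (Finset.mem_range.mpr ht)

lemma monster_instance (hk : 0 < k) :
    IsInstance (Pf k) (Df k) ∧ DistinctY (Pf k) ∧ (Df k).Nonempty ∧
      ((Pf k).image Prod.fst).card ≤ 2^k := by
  refine ⟨?_, ?_, ?_, ?_⟩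
  · intro d hd
    obtain ⟨σ, hσ, rfl⟩ := Finset.mem_image.mp hd
    obtain ⟨hℓ, ht, hb⟩ := (mem_Tf k).mp hσ
    have htadd := time_add_lt k hℓ ht hb
    refine ⟨?_, ?_, ?_⟩
    · rw [demF_fst]
      exact Pf_mem k ht
    · rw [demF_snd k hσ]
      exact Pf_mem k htadd
    · show ((KK k σ : ℝ)) < ((KK k σ + hh k σ : ℕ) : ℝ)
      have : KK k σ < KK k σ + hh k σ := by
        have : (1:ℕ) ≤ hh k σ := Nat.one_le_two_pow
        omega
      exact_mod_cast this
  · intro p hp q hq hne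
    obtain ⟨a, ha, rfl⟩ := Finset.mem_image.mp hp
    obtain ⟨b, hb, rfl⟩ := Finset.mem_image.mp hq
    intro h2
    apply hne
    have : (a : ℝ) = (b : ℝ) := h2
    have : a = b := by exact_mod_cast this
    rw [this]
  · refine ⟨demF k ⟨0, 0⟩, Df_mem k ?_⟩
    rw [mem_Tf]
    refine ⟨hk, Nat.two_pow_pos _, by simp⟩
  · calc ((Pf k).image Prod.fst).card ≤ (Pf k).card := Finset.card_image_le
      _ ≤ (Finset.range (2^k)).card := Finset.card_image_le
      _ = 2^k := Finset.card_range _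

lemma monster_isn (D' : Finset Dem) (hsub : ↑D' ⊆ (↑(Df k) : Set Dem))
    (hbis : LeftBIS D' ∨ RightBIS D') : D'.card ≤ 2^k := by
  classical
  have hmem : ∀ d ∈ D', ∃ σ ∈ Tf k, demF k σ = d := by
    intro d hd
    have : d ∈ Df k := hsub hd
    exact Finset.mem_image.mp this
  -- basic per-demand facts
  have hfacts : ∀ d ∈ D', d.1.2 + 1 ≤ d.2.2 ∧ d.1 ∈ Pf k ∧ d.2 ∈ Pf k := by
    intro d hd
    obtain ⟨σ, hσ, rfl⟩ := hmem d hd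
    obtain ⟨hℓ, ht, hb⟩ := (mem_Tf k).mp hσ
    have h1 : (1:ℕ) ≤ 2^σ.1 := Nat.one_le_two_pow
    refine ⟨?_, ?_, ?_⟩
    · show ((σ.2 : ℝ)) + 1 ≤ ((σ.2 + 2^σ.1 : ℕ) : ℝ)
      have : σ.2 + 1 ≤ σ.2 + 2^σ.1 := by omega
      exact_mod_cast this
    · rw [demF_fst]; exact Pf_mem k ht
    · rw [demF_snd k hσ]; exact Pf_mem k (time_add_lt k hℓ ht hb)
  rcases hbis with hbis | hbis
  · -- map to the left endpoint
    have hinj : ∀ d ∈ D', ∀ e ∈ D', d.1 = e.1 → d = e := by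
      intro d hd e he heq
      by_contra hne
      have hss := hbis d hd e he hne
      have h1 := (hfacts d hd).1
      have h2 := (hfacts e he).1
      have he1 : e.1.1 = d.1.1 := by rw [heq]
      have he2 : e.1.2 = d.1.2 := by rw [heq]
      have hz1m : ((d.1.1, d.1.2) : Pt) ∈ LSeg d ∩ LSeg e := by
        constructor
        · exact ⟨rfl, min_le_left _ _, le_max_left _ _⟩
        · refine ⟨he1.symm, ?_, ?_⟩
          · show min e.1.2 e.2.2 ≤ d.1.2
            linarith [min_le_left e.1.2 e.2.2]
          · show d.1.2 ≤ max e.1.2 e.2.2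
            linarith [le_max_left e.1.2 e.2.2]
      have hz2m : ((d.1.1, d.1.2 + 1) : Pt) ∈ LSeg d ∩ LSeg e := by
        constructor
        · refine ⟨rfl, ?_, ?_⟩
          · show min d.1.2 d.2.2 ≤ d.1.2 + 1
            linarith [min_le_left d.1.2 d.2.2]
          · show d.1.2 + 1 ≤ max d.1.2 d.2.2
            linarith [le_max_right d.1.2 d.2.2]
        · refine ⟨he1.symm, ?_, ?_⟩
          · show min e.1.2 e.2.2 ≤ d.1.2 + 1
            linarith [min_le_left e.1.2 e.2.2]
          · show d.1.2 + 1 ≤ max e.1.2 e.2.2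
            linarith [le_max_right e.1.2 e.2.2]
      have heqz := hss hz1m hz2m
      have : (d.1.2 : ℝ) = d.1.2 + 1 := congrArg Prod.snd heqz
      linarith
    calc D'.card ≤ (Pf k).card := by
          apply Finset.card_le_card_of_injOn (fun d => d.1)
          · intro d hd; exact (hfacts d hd).2.1
          · intro a ha b hb h; exact hinj a ha b hb h
      _ ≤ 2^k := by
          calc (Pf k).card ≤ (Finset.range (2^k)).card := Finset.card_image_le
            _ = 2^k := Finset.card_range _
  · have hinj : ∀ d ∈ D', ∀ e ∈ D', d.2 = e.2 → d = e := by
      intro d hd e he heq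
      by_contra hne
      have hss := hbis d hd e he hne
      have h1 := (hfacts d hd).1
      have h2 := (hfacts e he).1
      have he1 : e.2.1 = d.2.1 := by rw [heq]
      have he2 : e.2.2 = d.2.2 := by rw [heq]
      have hz1m : ((d.2.1, d.2.2) : Pt) ∈ RSeg d ∩ RSeg e := by
        constructor
        · exact ⟨rfl, min_le_right _ _, le_max_right _ _⟩
        · refine ⟨he1.symm, ?_, ?_⟩
          · show min e.1.2 e.2.2 ≤ d.2.2
            linarith [min_le_right e.1.2 e.2.2]
          · show d.2.2 ≤ max e.1.2 e.2.2
            linarith [le_max_right e.1.2 e.2.2]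
      have hz2m : ((d.2.1, d.2.2 - 1) : Pt) ∈ RSeg d ∩ RSeg e := by
        constructor
        · refine ⟨rfl, ?_, ?_⟩
          · show min d.1.2 d.2.2 ≤ d.2.2 - 1
            linarith [min_le_left d.1.2 d.2.2]
          · show d.2.2 - 1 ≤ max d.1.2 d.2.2
            linarith [le_max_right d.1.2 d.2.2]
        · refine ⟨he1.symm, ?_, ?_⟩
          · show min e.1.2 e.2.2 ≤ d.2.2 - 1
            linarith [min_le_left e.1.2 e.2.2]
          · show d.2.2 - 1 ≤ max e.1.2 e.2.2
            linarith [le_max_right e.1.2 e.2.2]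
      have heqz := hss hz1m hz2m
      have : (d.2.2 : ℝ) = d.2.2 - 1 := congrArg Prod.snd heqz
      linarith
    calc D'.card ≤ (Pf k).card := by
          apply Finset.card_le_card_of_injOn (fun d => d.2)
          · intro d hd; exact (hfacts d hd).2.2
          · intro a ha b hb h; exact hinj a ha b hb h
      _ ≤ 2^k := by
          calc (Pf k).card ≤ (Finset.range (2^k)).card := Finset.card_image_le
            _ = 2^k := Finset.card_range _

lemma sum_fiber_le (Q : Finset Pt) (R : Finset ℝ) :
    ∑ y ∈ R, (Q.filter (fun z => z.2 = y)).card ≤ Q.card := by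
  classical
  have h0 : ∀ y ∈ R, (Q.filter (fun z => z.2 = y)).card
      = ((Q.filter (fun z => z.2 ∈ R)).filter (fun z => z.2 = y)).card := by
    intro y hy
    congr 1
    ext z
    simp only [Finset.mem_filter]
    constructor
    · rintro ⟨hz, hzy⟩
      exact ⟨⟨hz, by rw [hzy]; exact hy⟩, hzy⟩
    · rintro ⟨⟨hz, _⟩, hzy⟩
      exact ⟨hz, hzy⟩
  rw [Finset.sum_congr rfl h0]
  rw [← Finset.card_eq_sum_card_fiberwise
    (f := fun z : Pt => z.2) (s := Q.filter (fun z => z.2 ∈ R)) (t := R)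
    (fun x hx => (Finset.mem_filter.mp hx).2)]
  exact Finset.card_filter_le _ _

lemma Tf_card (hk : 0 < k) : (Tf k).card = k * 2^(k-1) := by
  unfold Tf
  rw [Finset.card_sigma]
  rw [Finset.sum_congr rfl (fun ℓ hℓ => cnt k ℓ (Finset.mem_range.mp hℓ))]
  rw [Finset.sum_const, Finset.card_range, smul_eq_mul]

lemma monster_count (hk : 0 < k) (Q : Finset Pt)
    (hQ : MFeasible ↑(Pf k) ↑(Df k) ↑Q) :
    k * 2^(k-1) ≤ 2 * Q.card + 2 * 2^k := by
  classical
  have hex : ∀ σ : SIdx, ∃ r : ℝ × ℝ × ℝ, σ ∈ Tf k →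
      ((blN k σ : ℝ) ≤ r.2.1 ∧ r.2.1 ≤ muR k σ ∧ muR k σ ≤ r.2.2 ∧ r.2.2 ≤ (bhN k σ : ℝ) ∧
       ((r.2.1, r.1) ∈ (↑(Pf k) ∪ ↑Q : Set Pt)) ∧ ((r.2.2, r.1) ∈ (↑(Pf k) ∪ ↑Q : Set Pt)) ∧
       ((σ.2 : ℝ) ≤ r.1) ∧ (r.1 ≤ ((σ.2 + 2^σ.1 : ℕ) : ℝ))) := by
    intro σ
    by_cases hσ : σ ∈ Tf k
    · obtain ⟨hℓ, ht, hb⟩ := (mem_Tf k).mp hσ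
      have hMC := hQ (demF k σ) (Finset.mem_coe.mpr (Df_mem k hσ))
      obtain ⟨hm1, hm2, hm3, hm4, hm5, hm6⟩ := mu_facts k hσ
      have hcast : ((KK k σ + hh k σ : ℕ) : ℝ) = (KK k σ : ℝ) + (hh k σ : ℝ) := by push_cast; ring
      have hplt : (demF k σ).1.1 < muR k σ := hm1
      have hqgt : muR k σ < (demF k σ).2.1 := by
        show muR k σ < ((KK k σ + hh k σ : ℕ) : ℝ)
        rw [hcast]
        exact hm2
      obtain ⟨u, v, huS, hvS, hal, hu, hv, huR, hvR⟩ := mconn_extract hMC hplt hqgt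
      have hxle : (demF k σ).1.1 ≤ (demF k σ).2.1 := le_of_lt (lt_trans hplt hqgt)
      have hyle : (demF k σ).1.2 ≤ (demF k σ).2.2 := by
        show ((σ.2 : ℝ)) ≤ ((σ.2 + 2^σ.1 : ℕ) : ℝ)
        exact_mod_cast Nat.le_add_right _ _
      obtain ⟨ru1, ru2, ru3, ru4⟩ := huR
      obtain ⟨rv1, rv2, rv3, rv4⟩ := hvR
      rw [min_eq_left hxle] at ru1 rv1
      rw [max_eq_right hxle] at ru2 rv2
      rw [min_eq_left hyle] at ru3 rv3
      rw [max_eq_right hyle] at ru4 rv4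
      rcases hal with hal | hal
      · -- vertical edge: u.1 = v.1 = μ
        have huv : u.1 = muR k σ := le_antisymm hu (by rw [hal]; exact hv)
        refine ⟨(u.2, muR k σ, muR k σ), fun _ => ⟨hm5, le_refl _, le_refl _, hm6, ?_, ?_, ru3, ru4⟩⟩
        · have : ((muR k σ, u.2) : Pt) = u := by rw [← huv]
          rw [this]; exact huS
        · have : ((muR k σ, u.2) : Pt) = u := by rw [← huv]
          rw [this]; exact huS
      · -- horizontal edge: u.2 = v.2
        refine ⟨(u.2, u.1, v.1), fun _ => ⟨?_, hu, hv, ?_, ?_, ?_, ru3, ru4⟩⟩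
        · calc (blN k σ : ℝ) ≤ (KK k σ : ℝ) := hm3
            _ ≤ u.1 := ru1
        · calc v.1 ≤ (demF k σ).2.1 := rv2
            _ = (KK k σ : ℝ) + (hh k σ : ℝ) := hcast
            _ ≤ (bhN k σ : ℝ) := hm4
        · have : ((u.1, u.2) : Pt) = u := rfl
          rw [this]; exact huS
        · have : ((v.1, u.2) : Pt) = v := by rw [hal]
          rw [this]; exact hvS
    · exact ⟨(0,0,0), fun h => absurd h hσ⟩
  choose data hdata using hex
  set rowF : SIdx → ℝ := fun σ => (data σ).1 with hrowF
  set R := (Tf k).image rowF with hR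
  have hfib : (Tf k).card = ∑ y ∈ R, ((Tf k).filter (fun σ => rowF σ = y)).card :=
    Finset.card_eq_sum_card_fiberwise (fun x hx => Finset.mem_image_of_mem _ hx)
  have hrow : ∀ y ∈ R, ((Tf k).filter (fun σ => rowF σ = y)).card ≤
      2 * ((((Pf k) ∪ Q).filter (fun z => z.2 = y)).image Prod.fst).card := by
    intro y hy
    apply row_lemma _ (fun σ => (blN k σ : ℝ)) (fun σ => (bhN k σ : ℝ)) (muR k)
      (fun σ => (data σ).2.1) (fun σ => (data σ).2.2)
    · intro σ hσ'
      obtain ⟨hσT, hrowy⟩ := Finset.mem_filter.mp hσ'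
      obtain ⟨g1, g2, g3, g4, g5, g6, g7, g8⟩ := hdata σ hσT
      exact ⟨g1, g2, g3, g4⟩
    · intro σ hσ'
      obtain ⟨hσT, hrowy⟩ := Finset.mem_filter.mp hσ'
      obtain ⟨g1, g2, g3, g4, g5, g6, g7, g8⟩ := hdata σ hσT
      constructor
      · apply Finset.mem_image.mpr
        refine ⟨((data σ).2.1, y), ?_, rfl⟩
        apply Finset.mem_filter.mpr
        refine ⟨?_, rfl⟩
        rw [← Finset.coe_union] at g5
        rw [← hrowy]
        exact Finset.mem_coe.mp g5
      · apply Finset.mem_image.mpr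
        refine ⟨((data σ).2.2, y), ?_, rfl⟩
        apply Finset.mem_filter.mpr
        refine ⟨?_, rfl⟩
        rw [← Finset.coe_union] at g6
        rw [← hrowy]
        exact Finset.mem_coe.mp g6
    · intro σ hσ' σ'' hσ'' hne
      obtain ⟨hσT, hrowy⟩ := Finset.mem_filter.mp hσ'
      obtain ⟨hσT'', hrowy''⟩ := Finset.mem_filter.mp hσ''
      obtain ⟨-, -, -, -, -, -, g7, g8⟩ := hdata σ hσT
      obtain ⟨-, -, -, -, -, -, g7'', g8''⟩ := hdata σ'' hσT''
      have hyy : (data σ).1 = y := hrowy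
      have hyy'' : (data σ'').1 = y := hrowy''
      rw [hyy] at g7 g8
      rw [hyy''] at g7'' g8''
      have hov1 : σ''.2 ≤ σ.2 + 2^σ.1 := by
        have : ((σ''.2 : ℕ) : ℝ) ≤ ((σ.2 + 2^σ.1 : ℕ) : ℝ) := le_trans g7'' g8
        exact_mod_cast this
      have hov2 : σ.2 ≤ σ''.2 + 2^σ''.1 := by
        have : ((σ.2 : ℕ) : ℝ) ≤ ((σ''.2 + 2^σ''.1 : ℕ) : ℝ) := le_trans g7 g8''
        exact_mod_cast this
      exact pair_main k hσT hσT'' hne hov1 hov2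
  have hA_le : ∀ y : ℝ, ((((Pf k) ∪ Q).filter (fun z => z.2 = y)).image Prod.fst).card ≤
      ((Pf k).filter (fun z => z.2 = y)).card + (Q.filter (fun z => z.2 = y)).card := by
    intro y
    calc ((((Pf k) ∪ Q).filter (fun z => z.2 = y)).image Prod.fst).card
        ≤ (((Pf k) ∪ Q).filter (fun z => z.2 = y)).card := Finset.card_image_le
      _ = (((Pf k).filter (fun z => z.2 = y)) ∪ (Q.filter (fun z => z.2 = y))).card := by
          rw [Finset.filter_union]
      _ ≤ _ := Finset.card_union_le _ _
  have hsum1 : ∑ y ∈ R, ((Pf k).filter (fun z => z.2 = y)).card ≤ 2^k := by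
    calc ∑ y ∈ R, ((Pf k).filter (fun z => z.2 = y)).card ≤ (Pf k).card := sum_fiber_le _ _
      _ ≤ (Finset.range (2^k)).card := Finset.card_image_le
      _ = 2^k := Finset.card_range _
  have hsum2 : ∑ y ∈ R, (Q.filter (fun z => z.2 = y)).card ≤ Q.card := sum_fiber_le _ _
  calc k * 2^(k-1) = (Tf k).card := (Tf_card k hk).symm
    _ = ∑ y ∈ R, ((Tf k).filter (fun σ => rowF σ = y)).card := hfib
    _ ≤ ∑ y ∈ R, 2 * ((((Pf k) ∪ Q).filter (fun z => z.2 = y)).image Prod.fst).card :=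
        Finset.sum_le_sum hrow
    _ ≤ ∑ y ∈ R, 2 * (((Pf k).filter (fun z => z.2 = y)).card + (Q.filter (fun z => z.2 = y)).card) := by
        apply Finset.sum_le_sum
        intro y hy
        exact Nat.mul_le_mul_left _ (hA_le y)
    _ = 2 * ((∑ y ∈ R, ((Pf k).filter (fun z => z.2 = y)).card) +
          (∑ y ∈ R, (Q.filter (fun z => z.2 = y)).card)) := by
        rw [← Finset.mul_sum, ← Finset.sum_add_distrib]
    _ ≤ 2 * (2^k + Q.card) := by
        apply Nat.mul_le_mul_left
        omega
    _ = 2 * Q.card + 2 * 2^k := by ring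

end Monster

end StmtSeven

/-- There is an absolute constant `c > 0` such that for every `s ≥ 2` there is an
`s`-thin MinGMConn instance with nonempty demand set satisfying
`opt(P,D) ≥ c·(log₂ s)·IS(P,D)`. -/
theorem stmt7 : ∃ c : ℝ, 0 < c ∧
    ∀ s : ℕ, 2 ≤ s →
    ∃ (P : Finset Pt) (D : Finset Dem),
      IsInstance P D ∧ DistinctY P ∧ D.Nonempty ∧ (P.image Prod.fst).card ≤ s ∧
      ∀ Q : Finset Pt, MFeasible ↑P ↑D ↑Q →
        c * Real.logb 2 s * (ISN ↑D : ℝ) ≤ (Q.card : ℝ) := by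
  classical
  refine ⟨1/32, by norm_num, ?_⟩
  intro s hs
  by_cases hsmall : s < 32
  · -- trivial single-demand instance for small s
    set p0 : Pt := ((0:ℝ), (0:ℝ)) with hp0
    set q0 : Pt := ((1:ℝ), (1:ℝ)) with hq0
    refine ⟨{p0, q0}, {(p0, q0)}, ?_, ?_, ?_, ?_, ?_⟩
    · intro d hd
      simp only [Finset.mem_singleton] at hd
      subst hd
      refine ⟨by simp, by simp, by norm_num [p0, q0]⟩
    · intro p hp q hq hne
      simp only [Finset.mem_insert, Finset.mem_singleton] at hp hq
      rcases hp with rfl | rfl <;> rcases hq with rfl | rfl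
      · exact absurd rfl hne
      · show (0:ℝ) ≠ 1; norm_num
      · show (1:ℝ) ≠ 0; norm_num
      · exact absurd rfl hne
    · exact ⟨_, Finset.mem_singleton_self _⟩
    · calc (({p0, q0} : Finset Pt).image Prod.fst).card
          ≤ ({p0, q0} : Finset Pt).card := Finset.card_image_le
        _ ≤ 2 := (Finset.card_insert_le _ _).trans (by simp)
        _ ≤ s := hs
    · intro Q hQ
      have hISN : ISN (↑({(p0, q0)} : Finset Dem)) ≤ 1 := by
        unfold ISN
        apply csSup_le
        · exact ⟨0, ∅, by simp, rfl, Or.inl (by intro d hd; simp at hd)⟩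
        rintro n ⟨D', hD'sub, rfl, -⟩
        have hsub' : D' ⊆ {(p0, q0)} := by
          intro d hd
          have := hD'sub (Finset.mem_coe.mpr hd)
          simpa using this
        calc D'.card ≤ ({(p0, q0)} : Finset Dem).card := Finset.card_le_card hsub'
          _ = 1 := Finset.card_singleton _
      have hQne : 1 ≤ Q.card := by
        have hMC := hQ (p0, q0) (by simp)
        have h1 : (p0, q0).1.1 < (1/2 : ℝ) := by norm_num [p0]
        have h2 : (1/2 : ℝ) < (p0, q0).2.1 := by norm_num [q0]
        obtain ⟨u, v, huS, hvS, hal, hu, hv, huR, hvR⟩ := mconn_extract hMC h1 h2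
        have hPmem : ∀ w : Pt, w ∈ (↑({p0, q0} : Finset Pt) : Set Pt) → w = p0 ∨ w = q0 := by
          intro w hw
          simpa using hw
        have hgoal : ∃ w : Pt, w ∈ (↑Q : Set Pt) := by
          rcases hal with hal | hal
          · -- vertical: u.1 = v.1 = 1/2
            have huv : u.1 = (1/2 : ℝ) := le_antisymm hu (by rw [hal]; exact hv)
            rcases huS with huP | huQ
            · rcases hPmem u huP with rfl | rfl
              · norm_num [p0] at huv
              · norm_num [q0] at huv
            · exact ⟨u, huQ⟩
          · -- horizontal: u.2 = v.2
            rcases huS with huP | huQ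
            · rcases hPmem u huP with rfl | rfl
              · -- u = p0, so v.2 = 0 and v.1 ≥ 1/2 : v must be in Q
                rcases hvS with hvP | hvQ
                · rcases hPmem v hvP with rfl | rfl
                  · -- v = p0 : but 1/2 ≤ v.1 = 0
                    norm_num [p0] at hv
                  · -- v = q0 : but u.2 = v.2 gives 0 = 1
                    rw [hp0, hq0] at hal
                    norm_num at hal
                · exact ⟨v, hvQ⟩
              · -- u = q0 : u.1 = 1 ≤ 1/2 false
                norm_num [q0] at hu
            · exact ⟨u, huQ⟩
        obtain ⟨w, hw⟩ := hgoal
        exact Finset.card_pos.mpr ⟨w, Finset.mem_coe.mp hw⟩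
      -- numeric finish
      have hlogb : Real.logb 2 s ≤ 5 := by
        have hsle : (s : ℝ) ≤ 32 := by exact_mod_cast (by omega : s ≤ 32)
        have hspos : (0:ℝ) < s := by positivity
        calc Real.logb 2 s ≤ Real.logb 2 32 :=
              Real.logb_le_logb_of_le (by norm_num) hspos hsle
          _ = Real.logb 2 ((2:ℝ)^(5:ℕ)) := by norm_num
          _ = (5:ℕ) * Real.logb 2 2 := Real.logb_pow 2 2 5
          _ = 5 := by rw [Real.logb_self_eq_one (by norm_num)]; norm_num
      have hlogb0 : 0 ≤ Real.logb 2 s := Real.logb_nonneg (by norm_num)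
        (by exact_mod_cast (by omega : 1 ≤ s))
      have hISNr : ((ISN (↑({(p0, q0)} : Finset Dem)) : ℕ) : ℝ) ≤ 1 := by exact_mod_cast hISN
      have hQr : (1:ℝ) ≤ (Q.card : ℝ) := by exact_mod_cast hQne
      have hISN0 : (0:ℝ) ≤ ((ISN (↑({(p0, q0)} : Finset Dem)) : ℕ) : ℝ) := Nat.cast_nonneg _
      calc (1/32 : ℝ) * Real.logb 2 s * (ISN (↑({(p0, q0)} : Finset Dem)) : ℝ)
          ≤ (1/32 : ℝ) * 5 * 1 := by
            apply mul_le_mul _ hISNr hISN0 (by norm_num)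
            apply mul_le_mul_of_nonneg_left hlogb (by norm_num)
        _ ≤ 1 := by norm_num
        _ ≤ (Q.card : ℝ) := hQr
  · -- the bit-reversal instance for large s
    push_neg at hsmall
    set k := Nat.log 2 s with hkdef
    have hk5 : 5 ≤ k := by
      have : (2:ℕ)^5 ≤ s := by norm_num; omega
      exact (Nat.le_log_iff_pow_le (by norm_num) (by omega)).mpr this
    have hk : 0 < k := by omega
    obtain ⟨hinst, hdy, hne, hcard⟩ := monster_instance k hk
    refine ⟨Pf k, Df k, hinst, hdy, hne, ?_, ?_⟩
    · calc ((Pf k).image Prod.fst).card ≤ 2^k := hcard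
        _ ≤ s := Nat.pow_log_le_self 2 (by omega)
    · intro Q hQ
      have hcount := monster_count k hk Q hQ
      have hISN : ISN (↑(Df k)) ≤ 2^k := by
        unfold ISN
        apply csSup_le
        · exact ⟨0, ∅, by simp, rfl, Or.inl (by intro d hd; simp at hd)⟩
        rintro n ⟨D', hsub, rfl, hbis⟩
        exact monster_isn k D' hsub hbis
      have hlogb : Real.logb 2 s ≤ (k:ℝ) + 1 := by
        have h1 : (s:ℝ) ≤ (2:ℝ)^(k+1) := by
          exact_mod_cast (Nat.lt_pow_succ_log_self (by norm_num) s).le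
        have hspos : (0:ℝ) < s := by positivity
        calc Real.logb 2 s ≤ Real.logb 2 ((2:ℝ)^(k+1)) :=
              Real.logb_le_logb_of_le (by norm_num) hspos h1
          _ = ((k+1 : ℕ):ℝ) * Real.logb 2 2 := Real.logb_pow 2 2 (k+1)
          _ = (k:ℝ) + 1 := by rw [Real.logb_self_eq_one (by norm_num)]; push_cast; ring
      have hlogb0 : 0 ≤ Real.logb 2 s := Real.logb_nonneg (by norm_num)
        (by exact_mod_cast (by omega : 1 ≤ s))
      have hISNr : ((ISN (↑(Df k)) : ℕ) : ℝ) ≤ (2:ℝ)^k := by exact_mod_cast hISN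
      have hISN0 : (0:ℝ) ≤ ((ISN (↑(Df k)) : ℕ) : ℝ) := Nat.cast_nonneg _
      have hcountR : (k:ℝ) * (2:ℝ)^(k-1) ≤ 2 * (Q.card : ℝ) + 2 * (2:ℝ)^k := by
        exact_mod_cast hcount
      have hpow : (2:ℝ)^k = 2 * (2:ℝ)^(k-1) := by
        rw [← pow_succ']
        congr 1
        omega
      have hx : (0:ℝ) < (2:ℝ)^(k-1) := by positivity
      have hk5R : (5:ℝ) ≤ (k:ℝ) := by exact_mod_cast hk5
      have h5x : 5 * (2:ℝ)^(k-1) ≤ (k:ℝ) * (2:ℝ)^(k-1) :=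
        mul_le_mul_of_nonneg_right hk5R hx.le
      calc (1/32 : ℝ) * Real.logb 2 s * (ISN (↑(Df k)) : ℝ)
          ≤ (1/32 : ℝ) * ((k:ℝ) + 1) * (2:ℝ)^k := by
            apply mul_le_mul _ hISNr hISN0 _
            · apply mul_le_mul_of_nonneg_left hlogb (by norm_num)
            · positivity
        _ ≤ (Q.card : ℝ) := by
            rw [hpow] at hcountR ⊢
            nlinarith [hcountR, hx.le, h5x]
end

section
/- Let (P,D) be a MinGMConn instance (input points with pairwise distinct y-coordinates) with strip subdivision 𝒮, and let Q be a feasible solution to the inter-strip instance π_𝒮(P,D). Then for every demand (p,q) ∈ D such that p and q lie in different strips of 𝒮, the points p and q are M-connected in P ∪ π_𝒮(P) ∪ Q; that is, Q ∪ π_𝒮(P) satisfies all demands of D whose endpoints lie in different strips. -/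
lemma abs_seg (a b c : ℝ) (h1 : min a b ≤ c) (h2 : c ≤ max a b) :
    |a - c| + |c - b| = |a - b| := by
  rcases le_total a b with h | h
  · rw [min_eq_left h] at h1; rw [max_eq_right h] at h2
    rw [abs_of_nonpos (by linarith), abs_of_nonpos (by linarith),
      abs_of_nonpos (by linarith)]; ring
  · rw [min_eq_right h] at h1; rw [max_eq_left h] at h2
    rw [abs_of_nonneg (by linarith), abs_of_nonneg (by linarith),
      abs_of_nonneg (by linarith)]; ring

lemma dist1_rect {p m q : Pt} (h : m ∈ Rect p q) :
    dist1 p m + dist1 m q = dist1 p q := by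
  obtain ⟨h1, h2, h3, h4⟩ := h
  have hx := abs_seg p.1 q.1 m.1 h1 h2
  have hy := abs_seg p.2 q.2 m.2 h3 h4
  simp only [dist1]; linarith

lemma MConnected.mono {S T : Set Pt} (hST : S ⊆ T) {p q : Pt}
    (h : MConnected S p q) : MConnected T p q := by
  obtain ⟨k, f, h0, hl, hm, ha, hs⟩ := h
  exact ⟨k, f, h0, hl, fun i => hST (hm i), ha, hs⟩

lemma MConnected.single {S : Set Pt} {p q : Pt} (h : Aligned p q)
    (hp : p ∈ S) (hq : q ∈ S) : MConnected S p q := by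
  refine ⟨1, ![p, q], rfl, rfl, ?_, ?_, ?_⟩
  · intro i; fin_cases i <;> simpa
  · intro i; fin_cases i; simpa
  · simp

lemma MConnected.cons {S : Set Pt} {p a q : Pt} (h : MConnected S a q)
    (hp : p ∈ S) (hal : Aligned p a)
    (hd : dist1 p a + dist1 a q = dist1 p q) : MConnected S p q := by
  obtain ⟨k, f, h0, hl, hm, ha, hs⟩ := h
  refine ⟨k + 1, Fin.cases p f, ?_, ?_, ?_, ?_, ?_⟩
  · simp
  · rw [← Fin.succ_last]; exact hl
  · intro i
    induction i using Fin.cases with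
    | zero => simpa
    | succ j => simpa using hm j
  · intro i
    induction i using Fin.cases with
    | zero =>
        simpa only [Fin.castSucc_zero, Fin.cases_zero, Fin.cases_succ, h0] using hal
    | succ j => simpa [← Fin.succ_castSucc] using ha j
  · rw [Fin.sum_univ_succ, ← hd, ← hs]
    congr 1
    all_goals first
      | (apply Finset.sum_congr rfl; intro j _; simp [← Fin.succ_castSucc])
      | simp only [Fin.castSucc_zero, Fin.cases_zero, Fin.cases_succ, h0]

lemma MConnected.snoc {S : Set Pt} {p c q : Pt} (h : MConnected S p c)
    (hq : q ∈ S) (hal : Aligned c q)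
    (hd : dist1 p c + dist1 c q = dist1 p q) : MConnected S p q := by
  obtain ⟨k, f, h0, hl, hm, ha, hs⟩ := h
  refine ⟨k + 1, Fin.snoc f q, ?_, ?_, ?_, ?_, ?_⟩
  · rw [show (0 : Fin (k + 2)) = Fin.castSucc 0 from rfl, Fin.snoc_castSucc, h0]
  · simp
  · intro i
    induction i using Fin.lastCases with
    | last => simpa
    | cast j => simpa using hm j
  · intro i
    induction i using Fin.lastCases with
    | last => simpa [Fin.succ_last, hl] using hal
    | cast j => simpa [Fin.succ_castSucc, -Fin.castSucc_succ] using ha j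
  · rw [Fin.sum_univ_castSucc, ← hd, ← hs]
    congr 1
    · apply Finset.sum_congr rfl
      intro j _
      simp [Fin.succ_castSucc, -Fin.castSucc_succ]
    · simp [Fin.succ_last, hl]

/-- If `Q` is a feasible solution to the inter-strip instance `π_𝒮(P,D)`, then
`Q ∪ π_𝒮(P)` satisfies all demands of `D` whose endpoints lie in different strips. -/
theorem stmt9 (P : Finset Pt) (D : Finset Dem)
    (hinst : IsInstance P D) (hY : DistinctY P)
    (s : ℕ) (b : Fin (s + 1) → EReal) (hb : IsStripSubdivision s b P)
    (Q : Finset Pt)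
    (hQ : MFeasible (stripProj s b ↑P) (stripDem s b ↑D) ↑Q) :
    ∀ d ∈ D, (∃ i j : Fin s, i ≠ j ∧ d.1 ∈ strip s b i ∧ d.2 ∈ strip s b j) →
      MConnected (↑P ∪ stripProj s b ↑P ∪ ↑Q) d.1 d.2 := by
  rintro d hd ⟨i, j, hij, hpi, hqj⟩
  obtain ⟨hp1, hq1, hxy⟩ := hinst d hd
  obtain ⟨hs1, hmono, hb0, hbl, -⟩ := hb
  set p : Pt := d.1 with hp
  set q : Pt := d.2 with hq
  -- i < j
  have hilt : i < j := by
    rcases hij.lt_or_gt with h | h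
    · exact h
    · exfalso
      have h1 : b j.succ ≤ b i.castSucc := hmono.monotone (by
        rw [Fin.le_def]; simp; rw [Fin.lt_def] at h; omega)
      have h2 : (q.1 : EReal) < (p.1 : EReal) := lt_of_lt_of_le hqj.2 (h1.trans hpi.1.le)
      have h3 : (p.1 : EReal) < (q.1 : EReal) := by exact_mod_cast hxy
      exact absurd h3 h2.asymm
  have hij1 : i.val + 1 ≤ j.val := by rw [Fin.lt_def] at hilt; omega
  have hjs : j.val < s := j.isLt
  -- finiteness of boundaries
  have h1bot : ⊥ < b i.succ := by
    rw [← hb0]; exact hmono (by rw [Fin.lt_def]; simp)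
  have h1top : b i.succ < ⊤ := by
    rw [← hbl]; exact hmono (by rw [Fin.lt_def]; simp; omega)
  have h2bot : ⊥ < b j.castSucc := by
    rw [← hb0]; exact hmono (by rw [Fin.lt_def]; simp; omega)
  have h2top : b j.castSucc < ⊤ := by
    rw [← hbl]; exact hmono (by rw [Fin.lt_def]; simp)
  set c1 : ℝ := (b i.succ).toReal with hc1def
  set c2 : ℝ := (b j.castSucc).toReal with hc2def
  have hc1 : (c1 : EReal) = b i.succ := EReal.coe_toReal h1top.ne h1bot.ne'
  have hc2 : (c2 : EReal) = b j.castSucc := EReal.coe_toReal h2top.ne h2bot.ne'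
  have hpc1 : p.1 < c1 := by
    have := hpi.2; rw [← hc1] at this; exact_mod_cast this
  have hc2q : c2 < q.1 := by
    have := hqj.1; rw [← hc2] at this; exact_mod_cast this
  have hc12 : c1 ≤ c2 := by
    have h1 : b i.succ ≤ b j.castSucc := hmono.monotone (by
      rw [Fin.le_def]; simp; omega)
    rw [← hc1, ← hc2] at h1; exact_mod_cast h1
  set a : Pt := (c1, p.2) with hadef
  set a' : Pt := (c2, q.2) with ha'def
  set S : Set Pt := ↑P ∪ stripProj s b ↑P ∪ ↑Q with hSdef
  have ha_mem : a ∈ stripProj s b ↑P :=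
    ⟨p, Finset.mem_coe.mpr hp1, i, hpi, Or.inr ⟨by omega, rfl⟩⟩
  have ha'_mem : a' ∈ stripProj s b ↑P :=
    ⟨q, Finset.mem_coe.mpr hq1, j, hqj, Or.inl ⟨by simp; omega, rfl⟩⟩
  have haS : a ∈ S := Or.inl (Or.inr ha_mem)
  have ha'S : a' ∈ S := Or.inl (Or.inr ha'_mem)
  have hpS : p ∈ S := Or.inl (Or.inl (Finset.mem_coe.mpr hp1))
  have hqS : q ∈ S := Or.inl (Or.inl (Finset.mem_coe.mpr hq1))
  -- middle connection
  have hmid : MConnected S a a' := by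
    rcases eq_or_lt_of_le (show i.val + 1 ≤ j.val from hij1) with hcase | hcase
    · -- adjacent strips: a and a' are vertically aligned
      have hje : j.castSucc = i.succ := by
        apply Fin.ext; simp; omega
      have hcc : c2 = c1 := by rw [hc2def, hc1def, hje]
      exact MConnected.single (Or.inl (by simp [hadef, ha'def, hcc])) haS ha'S
    · -- non-adjacent: use feasibility of Q on the inter-strip demand
      have hdm : ((a, a') : Dem) ∈ stripDem s b ↑D :=
        ⟨d, Finset.mem_coe.mpr hd, i, j, hpi, hqj, by omega, rfl⟩
      have := hQ (a, a') hdm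
      exact this.mono (Set.union_subset_union_left _ Set.subset_union_right)
  have step1 : MConnected S a q := by
    refine hmid.snoc hqS (Or.inr rfl) (dist1_rect ?_)
    refine ⟨?_, ?_, ?_, ?_⟩
    · exact le_trans (min_le_left _ _) hc12
    · exact le_trans hc2q.le (le_max_right _ _)
    · exact min_le_right _ _
    · exact le_max_right _ _
  refine step1.cons hpS (Or.inr rfl) (dist1_rect ?_)
  refine ⟨?_, ?_, ?_, ?_⟩
  · exact le_trans (min_le_left _ _) hpc1.le
  · exact le_trans (hc12.trans hc2q.le) (le_max_right _ _)
  · exact min_le_left _ _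
  · exact le_max_left _ _
end

section
/- For every n ≥ 1 and every triangular instance (P_Δ, D_Δ) of size n, the minimum cardinality of a feasible solution equals n, i.e. opt(P_Δ, D_Δ) = n. -/
section Stmt11Aux

open Finset

private lemma fin_telescope {k : ℕ} (g : Fin (k + 1) → ℝ) :
    ∑ i : Fin k, (g i.succ - g i.castSucc) = g (Fin.last k) - g 0 := by
  classical
  let G : ℕ → ℝ := fun m => if h : m < k + 1 then g ⟨m, h⟩ else 0
  have key : ∀ i : Fin k, g i.succ - g i.castSucc = G (i.1 + 1) - G i.1 := by
    intro i
    have h1 : i.1 + 1 < k + 1 := Nat.succ_lt_succ i.2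
    have h2 : i.1 < k + 1 := Nat.lt_succ_of_lt i.2
    simp only [G, dif_pos h1, dif_pos h2]
    rfl
  calc ∑ i : Fin k, (g i.succ - g i.castSucc)
      = ∑ i : Fin k, (G (i.1 + 1) - G i.1) := Finset.sum_congr rfl fun i _ => key i
    _ = ∑ m ∈ Finset.range k, (G (m + 1) - G m) := Fin.sum_univ_eq_sum_range (fun m => G (m + 1) - G m) k
    _ = G k - G 0 := Finset.sum_range_sub G k
    _ = g (Fin.last k) - g 0 := by
        simp only [G, dif_pos (Nat.lt_succ_self k), dif_pos (Nat.succ_pos k)]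
        rfl

private lemma mconn_mono {k : ℕ} (f : Fin (k + 1) → Pt) (a b : Pt)
    (h0 : f 0 = a) (hl : f (Fin.last k) = b) (hx : a.1 ≤ b.1) (hy : a.2 ≤ b.2)
    (hsum : (∑ i : Fin k, dist1 (f i.castSucc) (f i.succ)) = dist1 a b) :
    (Monotone fun m => (f m).1) ∧ (Monotone fun m => (f m).2) := by
  have tx : ∑ i : Fin k, ((f i.succ).1 - (f i.castSucc).1) = b.1 - a.1 := by
    rw [fin_telescope (fun m => (f m).1), h0, hl]
  have ty : ∑ i : Fin k, ((f i.succ).2 - (f i.castSucc).2) = b.2 - a.2 := by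
    rw [fin_telescope (fun m => (f m).2), h0, hl]
  have habs : ∑ i : Fin k, (|(f i.succ).1 - (f i.castSucc).1| + |(f i.succ).2 - (f i.castSucc).2|)
      = (b.1 - a.1) + (b.2 - a.2) := by
    have h1 : dist1 a b = (b.1 - a.1) + (b.2 - a.2) := by
      simp only [dist1]
      rw [abs_sub_comm a.1 b.1, abs_sub_comm a.2 b.2,
        abs_of_nonneg (by linarith), abs_of_nonneg (by linarith)]
    rw [← h1, ← hsum]
    refine Finset.sum_congr rfl fun i _ => ?_
    simp only [dist1]
    rw [abs_sub_comm ((f i.succ).1) _, abs_sub_comm ((f i.succ).2) _]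
  have tx' : (∑ i : Fin k, (f i.succ).1) - (∑ i : Fin k, (f i.castSucc).1) = b.1 - a.1 := by
    rw [← Finset.sum_sub_distrib]; exact tx
  have ty' : (∑ i : Fin k, (f i.succ).2) - (∑ i : Fin k, (f i.castSucc).2) = b.2 - a.2 := by
    rw [← Finset.sum_sub_distrib]; exact ty
  have habs' : (∑ i : Fin k, |(f i.succ).1 - (f i.castSucc).1|)
      + (∑ i : Fin k, |(f i.succ).2 - (f i.castSucc).2|) = (b.1 - a.1) + (b.2 - a.2) := by
    rw [← Finset.sum_add_distrib]; exact habs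
  have g1 : b.1 - a.1 ≤ ∑ i : Fin k, |(f i.succ).1 - (f i.castSucc).1| :=
    tx ▸ Finset.sum_le_sum (fun i _ => le_abs_self _)
  have g2 : b.2 - a.2 ≤ ∑ i : Fin k, |(f i.succ).2 - (f i.castSucc).2| :=
    ty ▸ Finset.sum_le_sum (fun i _ => le_abs_self _)
  have e1 : ∑ i : Fin k, (|(f i.succ).1 - (f i.castSucc).1| - ((f i.succ).1 - (f i.castSucc).1))
      = (∑ i : Fin k, |(f i.succ).1 - (f i.castSucc).1|)
        - ((∑ i : Fin k, (f i.succ).1) - (∑ i : Fin k, (f i.castSucc).1)) := by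
    rw [Finset.sum_sub_distrib, Finset.sum_sub_distrib]
  have e2 : ∑ i : Fin k, (|(f i.succ).2 - (f i.castSucc).2| - ((f i.succ).2 - (f i.castSucc).2))
      = (∑ i : Fin k, |(f i.succ).2 - (f i.castSucc).2|)
        - ((∑ i : Fin k, (f i.succ).2) - (∑ i : Fin k, (f i.castSucc).2)) := by
    rw [Finset.sum_sub_distrib, Finset.sum_sub_distrib]
  have hnn1 : ∀ i ∈ (univ : Finset (Fin k)),
      0 ≤ |(f i.succ).1 - (f i.castSucc).1| - ((f i.succ).1 - (f i.castSucc).1) := by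
    intro i _; linarith [le_abs_self ((f i.succ).1 - (f i.castSucc).1)]
  have hnn2 : ∀ i ∈ (univ : Finset (Fin k)),
      0 ≤ |(f i.succ).2 - (f i.castSucc).2| - ((f i.succ).2 - (f i.castSucc).2) := by
    intro i _; linarith [le_abs_self ((f i.succ).2 - (f i.castSucc).2)]
  have hz1 : ∑ i : Fin k, (|(f i.succ).1 - (f i.castSucc).1| - ((f i.succ).1 - (f i.castSucc).1)) = 0 := by
    rw [e1, tx']
    linarith
  have hz2 : ∑ i : Fin k, (|(f i.succ).2 - (f i.castSucc).2| - ((f i.succ).2 - (f i.castSucc).2)) = 0 := by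
    rw [e2, ty']
    linarith
  constructor
  · rw [Fin.monotone_iff_le_succ]
    intro i
    have := (Finset.sum_eq_zero_iff_of_nonneg hnn1).1 hz1 i (mem_univ i)
    have h2 := le_abs_self ((f i.succ).1 - (f i.castSucc).1)
    have h3 := abs_nonneg ((f i.succ).1 - (f i.castSucc).1)
    linarith
  · rw [Fin.monotone_iff_le_succ]
    intro i
    have := (Finset.sum_eq_zero_iff_of_nonneg hnn2).1 hz2 i (mem_univ i)
    have h3 := abs_nonneg ((f i.succ).2 - (f i.castSucc).2)
    linarith

private lemma exists_pred {k : ℕ} (f : Fin (k + 1) → Pt)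
    (hali : ∀ i : Fin k, Aligned (f i.castSucc) (f i.succ))
    (m : Fin (k + 1)) (hm : f 0 ≠ f m) :
    ∃ l : Fin (k + 1), l < m ∧ f l ≠ f m ∧ Aligned (f l) (f m) := by
  classical
  set T : Finset (Fin (k + 1)) := univ.filter (fun l => l < m ∧ f l ≠ f m) with hT
  have hmpos : (0 : Fin (k + 1)) < m := by
    rcases Fin.eq_zero_or_eq_succ m with h | _
    · exact absurd (by rw [h]) hm
    · exact Fin.pos_iff_ne_zero.2 (fun h => hm (by rw [h]))
  have h0T : (0 : Fin (k + 1)) ∈ T := by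
    simp only [hT, mem_filter, mem_univ, true_and]
    exact ⟨hmpos, hm⟩
  obtain ⟨l, hlT, hlmax⟩ := Finset.exists_max_image T id ⟨0, h0T⟩
  simp only [hT, mem_filter, mem_univ, true_and] at hlT
  obtain ⟨hlm, hlne⟩ := hlT
  have hlk : l.1 < k := by
    have := hlm
    have hmk : m.1 ≤ k := Nat.lt_succ_iff.1 m.2
    have : l.1 < m.1 := hlm
    omega
  set i : Fin k := ⟨l.1, hlk⟩ with hi
  have hcast : i.castSucc = l := by
    apply Fin.ext; rfl
  have hsucc : f i.succ = f m := by
    by_cases h : f i.succ = f m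
    · exact h
    · exfalso
      have hsm : i.succ < m := by
        have h1 : l.1 + 1 ≤ m.1 := hlm
        rcases lt_or_eq_of_le h1 with h2 | h2
        · exact h2
        · exact absurd (congrArg f (Fin.ext h2 : i.succ = m)) h
      have : i.succ ∈ T := by
        simp only [hT, mem_filter, mem_univ, true_and]
        exact ⟨hsm, h⟩
      have := hlmax _ this
      simp only [id] at this
      have : l.1 + 1 ≤ l.1 := this
      omega
  have := hali i
  rw [hcast, hsucc] at this
  exact ⟨l, hlm, hlne, this⟩

end Stmt11Aux

/-- Every triangular instance of size `n ≥ 1` has `opt(P_Δ, D_Δ) = n`. -/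
theorem stmt11 (n : ℕ) (hn : 1 ≤ n) (p : Fin (n + 1) → Pt) (htri : IsTriangular n p) :
    optN ↑(triP n p) ↑(triD n p) = n := by
  classical
  obtain ⟨hxlt, hyanti, hy0⟩ := htri
  have hxinj : ∀ i j : Fin (n + 1), (p i).1 = (p j).1 → i = j := by
    intro i j h
    rcases lt_trichotomy i j with hij | hij | hij
    · exact absurd h (ne_of_lt (hxlt i j hij))
    · exact hij
    · exact absurd h.symm (ne_of_lt (hxlt j i hij))
  have hyinj : ∀ i j : Fin (n + 1), i ≠ 0 → j ≠ 0 → (p i).2 = (p j).2 → i = j := by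
    intro i j hi hj h
    rcases lt_trichotomy i j with hij | hij | hij
    · exact absurd h.symm (ne_of_lt (hyanti i j hi hij))
    · exact hij
    · exact absurd h (ne_of_lt (hyanti j i hj hij))
  have hup : n ∈ {m | ∃ Q : Finset Pt,
      MFeasible ↑(triP n p) ↑(triD n p) ↑Q ∧ Q.card = m} := by
    refine ⟨(Finset.univ.filter fun i : Fin (n + 1) => i ≠ 0).image
      (fun i => ((p 0).1, (p i).2)), ?_, ?_⟩
    · intro d hd
      rw [Finset.mem_coe] at hd
      simp only [triD, Finset.mem_image, Finset.mem_filter, Finset.mem_univ, true_and] at hd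
      obtain ⟨i, hi0, rfl⟩ := hd
      refine ⟨2, ![p 0, ((p 0).1, (p i).2), p i], rfl, rfl, ?_, ?_, ?_⟩
      · intro j
        fin_cases j
        · left
          simp only [triP, Finset.coe_image, Set.mem_image, Finset.mem_coe,
            Finset.coe_univ, Set.mem_univ]
          exact ⟨0, trivial, rfl⟩
        · right
          simp only [Finset.coe_image, Set.mem_image, Finset.mem_coe, Finset.mem_filter,
            Finset.mem_univ, true_and, Finset.coe_filter, Set.mem_setOf_eq]
          exact ⟨i, hi0, rfl⟩
        · left
          simp only [triP, Finset.coe_image, Set.mem_image, Finset.mem_coe,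
            Finset.coe_univ, Set.mem_univ]
          exact ⟨i, trivial, rfl⟩
      · intro j
        fin_cases j
        · exact Or.inl rfl
        · exact Or.inr rfl
      · rw [Fin.sum_univ_two]
        show dist1 (p 0) ((p 0).1, (p i).2) + dist1 ((p 0).1, (p i).2) (p i) = _
        simp only [dist1, sub_self, abs_zero]
        ring
    · have hinj : Set.InjOn (fun i => ((p 0).1, (p i).2))
          ↑(Finset.univ.filter fun i : Fin (n + 1) => i ≠ 0) := by
        intro i hi j hj hij
        simp only [Finset.coe_filter, Finset.mem_univ, true_and, Set.mem_setOf_eq] at hi hj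
        have h2 := congrArg Prod.snd hij
        exact hyinj i j hi hj h2
      rw [Finset.card_image_of_injOn hinj, Finset.filter_ne',
        Finset.card_erase_of_mem (Finset.mem_univ _), Finset.card_univ, Fintype.card_fin]
      omega
  have hlow : ∀ m ∈ {m | ∃ Q : Finset Pt,
      MFeasible ↑(triP n p) ↑(triD n p) ↑Q ∧ Q.card = m}, n ≤ m := by
    rintro m ⟨Q, hQ, rfl⟩
    set P0 : Pt := p 0 with hP0
    set W : Fin n → Finset Pt := fun i => Q.filter (fun q =>
      P0.1 ≤ q.1 ∧ q.1 ≤ (p i.succ).1 ∧ P0.2 ≤ q.2 ∧ q.2 ≤ (p i.succ).2 ∧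
      q ≠ p i.succ ∧ (q.1 = (p i.succ).1 ∨ q.2 = (p i.succ).2)) with hW
    have hWQ : ∀ i, W i ⊆ Q := fun i => Finset.filter_subset _ _
    have hWmem : ∀ (i : Fin n) (q : Pt), q ∈ W i ↔ (q ∈ Q ∧
        P0.1 ≤ q.1 ∧ q.1 ≤ (p i.succ).1 ∧ P0.2 ≤ q.2 ∧ q.2 ≤ (p i.succ).2 ∧
        q ≠ p i.succ ∧ (q.1 = (p i.succ).1 ∨ q.2 = (p i.succ).2)) := by
      intro i q
      rw [hW]
      exact Finset.mem_filter
    have hall : ∀ s : Finset (Fin n), s.card ≤ (s.biUnion W).card := by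
      by_contra hcon
      push_neg at hcon
      obtain ⟨s1, hs1⟩ := hcon
      obtain ⟨s₀, hs₀mem, hs₀min⟩ := Finset.exists_min_image
        ((Finset.univ : Finset (Finset (Fin n))).filter fun s => (s.biUnion W).card < s.card)
        Finset.card ⟨s1, Finset.mem_filter.2 ⟨Finset.mem_univ _, hs1⟩⟩
      rw [Finset.mem_filter] at hs₀mem
      have hdef : (s₀.biUnion W).card < s₀.card := hs₀mem.2
      have key : ∀ q ∈ s₀.biUnion W, ∃ a ∈ s₀, ∃ b ∈ s₀,
          q.1 = (p a.succ).1 ∧ q.2 = (p b.succ).2 ∧ (p b.succ).2 ≤ (p a.succ).2 := by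
        intro q hq
        obtain ⟨i, hi, hqi⟩ := Finset.mem_biUnion.1 hq
        have hqj : ∃ j ∈ s₀, j ≠ i ∧ q ∈ W j := by
          have herase : (s₀.erase i).card ≤ ((s₀.erase i).biUnion W).card := by
            by_contra h
            push_neg at h
            have hmem : s₀.erase i ∈ (Finset.univ : Finset (Finset (Fin n))).filter
                fun s => (s.biUnion W).card < s.card :=
              Finset.mem_filter.2 ⟨Finset.mem_univ _, h⟩
            have h2 := hs₀min _ hmem
            rw [Finset.card_erase_of_mem hi] at h2
            have h3 : 1 ≤ s₀.card := Finset.card_pos.2 ⟨i, hi⟩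
            omega
          have hsub : (s₀.erase i).biUnion W ⊆ s₀.biUnion W :=
            Finset.biUnion_subset_biUnion_of_subset_left W (Finset.erase_subset i s₀)
          have hle : (s₀.biUnion W).card ≤ ((s₀.erase i).biUnion W).card := by
            have h4 := Finset.card_erase_of_mem hi
            omega
          have heq : (s₀.erase i).biUnion W = s₀.biUnion W :=
            Finset.eq_of_subset_of_card_le hsub hle
          obtain ⟨j, hj, hqj⟩ := Finset.mem_biUnion.1 (heq ▸ hq)
          exact ⟨j, Finset.mem_of_mem_erase hj, Finset.ne_of_mem_erase hj, hqj⟩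
        obtain ⟨j, hj, hjne, hqj⟩ := hqj
        rw [hWmem] at hqi hqj
        obtain ⟨-, -, -, -, hyimax, -, hali1⟩ := hqi
        obtain ⟨-, -, -, -, hyjmax, -, hali2⟩ := hqj
        have hsne : j.succ ≠ i.succ := fun h => hjne (Fin.succ_injective _ h)
        rcases hali1 with h1 | h1 <;> rcases hali2 with h2 | h2
        · exact absurd (hxinj _ _ (h2.symm.trans h1)) hsne
        · exact ⟨i, hi, j, hj, h1, h2, by rw [← h2]; exact hyimax⟩
        · exact ⟨j, hj, i, hi, h2, h1, by rw [← h1]; exact hyjmax⟩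
        · exact absurd (hyinj _ _ (Fin.succ_ne_zero j) (Fin.succ_ne_zero i)
            (h2.symm.trans h1)) hsne
      have hs₀ne : s₀.Nonempty := Finset.card_pos.1 (by omega)
      obtain ⟨i0, hi0⟩ := hs₀ne
      have hdem : (P0, p i0.succ) ∈ triD n p := by
        simp only [triD, Finset.mem_image, Finset.mem_filter, Finset.mem_univ, true_and]
        exact ⟨i0.succ, Fin.succ_ne_zero i0, rfl⟩
      obtain ⟨k, f, hf0, hfl, hfmem, hfal, hfsum⟩ := hQ _ (Finset.mem_coe.2 hdem)
      have hf0' : f 0 = P0 := hf0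
      have hfl' : f (Fin.last k) = p i0.succ := hfl
      have hx0i : P0.1 < (p i0.succ).1 := hxlt 0 i0.succ (Fin.succ_pos i0)
      have hy0i : P0.2 < (p i0.succ).2 := hy0 i0.succ (Fin.succ_ne_zero i0)
      obtain ⟨mx0, my0⟩ := mconn_mono f P0 (p i0.succ) hf0' hfl' (le_of_lt hx0i)
        (le_of_lt hy0i) hfsum
      have mx : ∀ u v : Fin (k + 1), u ≤ v → (f u).1 ≤ (f v).1 := fun u v h => mx0 h
      have my : ∀ u v : Fin (k + 1), u ≤ v → (f u).2 ≤ (f v).2 := fun u v h => my0 h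
      have hvP : ∀ l : Fin (k + 1), f l ∈ Q ∨ ∃ j, p j = f l := by
        intro l
        rcases hfmem l with h | h
        · right
          rw [Finset.mem_coe] at h
          simp only [triP, Finset.mem_image, Finset.mem_univ, true_and] at h
          exact h
        · left; exact Finset.mem_coe.1 h
      have hstep : ∀ (mI : Fin (k + 1)) (a b : Fin n), a ∈ s₀ → b ∈ s₀ →
          (f mI).1 = (p a.succ).1 → (f mI).2 = (p b.succ).2 →
          (p b.succ).2 ≤ (p a.succ).2 →
          ∃ l : Fin (k + 1), l < mI ∧ f l ∈ s₀.biUnion W := by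
        intro mI a b ha hb hva hvb hba
        have hxa : P0.1 < (p a.succ).1 := hxlt 0 a.succ (Fin.succ_pos a)
        have hyb : P0.2 < (p b.succ).2 := hy0 b.succ (Fin.succ_ne_zero b)
        have hya : P0.2 < (p a.succ).2 := hy0 a.succ (Fin.succ_ne_zero a)
        have hxab : (p a.succ).1 ≤ (p b.succ).1 := by
          rcases lt_trichotomy a.succ b.succ with h | h | h
          · exact le_of_lt (hxlt _ _ h)
          · rw [h]
          · exact absurd hba (not_le.2 (hyanti b.succ a.succ (Fin.succ_ne_zero b) h))
        have hne0 : f 0 ≠ f mI := by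
          rw [hf0']
          intro h
          have h1 := congrArg Prod.fst h
          rw [hva] at h1
          exact absurd h1 (ne_of_lt hxa)
        obtain ⟨l, hlm, hlne, hlal⟩ := exists_pred f hfal mI hne0
        refine ⟨l, hlm, ?_⟩
        have hl1 : (f l).1 ≤ (f mI).1 := mx l mI (le_of_lt hlm)
        have hl2 : (f l).2 ≤ (f mI).2 := my l mI (le_of_lt hlm)
        have hg1 : P0.1 ≤ (f l).1 := by
          have h9 := mx 0 l (Fin.zero_le l); rwa [hf0'] at h9
        have hg2 : P0.2 ≤ (f l).2 := by
          have h9 := my 0 l (Fin.zero_le l); rwa [hf0'] at h9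
        rcases hlal with hX | hY
        · -- column case: f l ∈ W a
          have h2lt : (f l).2 < (f mI).2 := by
            rcases lt_or_eq_of_le hl2 with h | h
            · exact h
            · exact absurd (Prod.ext_iff.2 ⟨hX, h⟩) hlne
          have hlt : (f l).2 < (p b.succ).2 := by rw [← hvb]; exact h2lt
          have hfQ : f l ∈ Q := by
            rcases hvP l with h | ⟨j, hj⟩
            · exact h
            · exfalso
              have hj1 : (p j).1 = (p a.succ).1 := by rw [hj, hX, hva]
              have hje := hxinj _ _ hj1
              rw [hje] at hj
              have h5 : (f l).2 = (p a.succ).2 := by rw [← hj]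
              linarith
          refine Finset.mem_biUnion.2 ⟨a, ha, (hWmem a (f l)).2
            ⟨hfQ, hg1, ?_, hg2, ?_, ?_, Or.inl (hX.trans hva)⟩⟩
          · rw [hX.trans hva]
          · linarith
          · intro h
            have h5 : (f l).2 = (p a.succ).2 := by rw [h]
            linarith
        · -- row case: f l ∈ W b
          have h1lt : (f l).1 < (f mI).1 := by
            rcases lt_or_eq_of_le hl1 with h | h
            · exact h
            · exact absurd (Prod.ext_iff.2 ⟨h, hY⟩) hlne
          have hlt : (f l).1 < (p b.succ).1 := by
            have h6 : (f l).1 < (p a.succ).1 := by rw [← hva]; exact h1lt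
            linarith
          have hfQ : f l ∈ Q := by
            rcases hvP l with h | ⟨j, hj⟩
            · exact h
            · exfalso
              by_cases hj0 : j = 0
              · rw [hj0] at hj
                have h7 : P0.2 = (p b.succ).2 := by rw [← hP0] at hj; rw [hj, hY, hvb]
                exact absurd h7 (ne_of_lt hyb)
              · have hj2 : (p j).2 = (p b.succ).2 := by rw [hj, hY, hvb]
                have hje := hyinj _ _ hj0 (Fin.succ_ne_zero b) hj2
                rw [hje] at hj
                have h5 : (f l).1 = (p b.succ).1 := by rw [← hj]
                linarith
          refine Finset.mem_biUnion.2 ⟨b, hb, (hWmem b (f l)).2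
            ⟨hfQ, hg1, le_of_lt hlt, hg2, ?_, ?_, Or.inr (hY.trans hvb)⟩⟩
          · rw [hY.trans hvb]
          · intro h
            have h5 : (f l).1 = (p b.succ).1 := by rw [h]
            linarith
      have hlastco1 : (f (Fin.last k)).1 = (p i0.succ).1 := by rw [hfl']
      have hlastco2 : (f (Fin.last k)).2 = (p i0.succ).2 := by rw [hfl']
      obtain ⟨l0, _, hl0N⟩ := hstep (Fin.last k) i0 i0 hi0 hi0 hlastco1 hlastco2 le_rfl
      have hKne : (Finset.univ.filter (fun l : Fin (k + 1) => f l ∈ s₀.biUnion W)).Nonempty :=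
        ⟨l0, Finset.mem_filter.2 ⟨Finset.mem_univ _, hl0N⟩⟩
      obtain ⟨mstar, hmmem, hmmin⟩ := Finset.exists_min_image _ id hKne
      rw [Finset.mem_filter] at hmmem
      obtain ⟨a, ha, b, hb, hva, hvb, hba⟩ := key _ hmmem.2
      obtain ⟨l, hlm, hlN⟩ := hstep mstar a b ha hb hva hvb hba
      have h8 := hmmin l (Finset.mem_filter.2 ⟨Finset.mem_univ _, hlN⟩)
      simp only [id] at h8
      exact absurd hlm (not_lt.2 h8)
    obtain ⟨g, hginj, hgmem⟩ := (Finset.all_card_le_biUnion_card_iff_exists_injective W).1 hall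
    calc n = (Finset.univ : Finset (Fin n)).card := by simp
      _ ≤ Q.card := Finset.card_le_card_of_injOn g (fun i _ => hWQ i (hgmem i))
          (fun a _ b _ h => hginj h)
  have h1 : optN ↑(triP n p) ↑(triD n p) = sInf {m | ∃ Q : Finset Pt,
      MFeasible ↑(triP n p) ↑(triD n p) ↑Q ∧ Q.card = m} := rfl
  rw [h1]
  exact le_antisymm (Nat.sInf_le hup) (hlow _ (Nat.sInf_mem ⟨n, hup⟩))
end
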